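/- arXiv:1704.06453 — 5 statements merged into one kernel-verified Lean document; each statement's English description precedes it below -/
import Mathlib

section
/- Fix an integer r ≥ 1 and an odd prime p dividing r, with p^β exactly dividing r² and β = 2β′. Then the Euler factor ∑_{α≥0} ρ_{r²}(p^α)/p^α evaluated at s = 1 equals (1 + p⁻¹)/(1 − p⁻¹). -/
/-- `rho k d` counts residues `0 ≤ x < d` with `x² ≡ k (mod d)`. -/
def rho (k d : ℕ) : ℕ :=
  ((Finset.range d).filter (fun x => x ^ 2 % d = k % d)).card

lemma card_residue (q m a : ℕ) (hq : 0 < q) (ha : a < q) :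
    ((Finset.range (q * m)).filter (fun x => x % q = a)).card = m := by
  have himg : ((Finset.range (q * m)).filter (fun x => x % q = a))
      = (Finset.range m).image (fun i => i * q + a) := by
    ext x
    simp only [Finset.mem_filter, Finset.mem_range, Finset.mem_image]
    have hcomm : q * m = m * q := Nat.mul_comm q m
    constructor
    · rintro ⟨hx, hmod⟩
      refine ⟨x / q, ?_, ?_⟩
      · exact (Nat.div_lt_iff_lt_mul hq).2 (by omega)
      · have h1 := Nat.div_add_mod x q
        have h2 : q * (x / q) = (x / q) * q := Nat.mul_comm _ _
        omega
    · rintro ⟨i, hi, rfl⟩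
      have h3 : (i + 1) * q ≤ m * q := Nat.mul_le_mul_right q hi
      have h4 : (i + 1) * q = i * q + q := by ring
      refine ⟨by omega, ?_⟩
      rw [Nat.mul_comm i q, Nat.mul_add_mod]
      exact Nat.mod_eq_of_lt ha
  rw [himg, Finset.card_image_of_injective _ (fun i j h => by
    have : i * q = j * q := by omega
    exact Nat.eq_of_mul_eq_mul_right hq this), Finset.card_range]

lemma pow_dvd_sq_iff (p : ℕ) (hp : p.Prime) (α x : ℕ) :
    p ^ α ∣ x ^ 2 ↔ p ^ ((α + 1) / 2) ∣ x := by
  rcases eq_or_ne x 0 with rfl | hx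
  · simp
  have hx2 : x ^ 2 ≠ 0 := pow_ne_zero _ hx
  rw [hp.pow_dvd_iff_le_factorization hx2, hp.pow_dvd_iff_le_factorization hx,
    Nat.factorization_pow]
  simp only [Finsupp.smul_apply, smul_eq_mul]
  omega

lemma rho_low (p : ℕ) (hp : p.Prime) (α k : ℕ) (hk : p ^ α ∣ k) :
    rho k (p ^ α) = p ^ (α / 2) := by
  have hq : 0 < p ^ ((α + 1) / 2) := Nat.pow_pos hp.pos
  have hkmod : k % p ^ α = 0 := Nat.mod_eq_zero_of_dvd hk
  have hsplit : p ^ α = p ^ ((α + 1) / 2) * p ^ (α / 2) := by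
    rw [← pow_add]; congr 1; omega
  unfold rho
  rw [hkmod]
  have hfil : (Finset.range (p ^ α)).filter (fun x => x ^ 2 % p ^ α = 0)
      = (Finset.range (p ^ α)).filter (fun x => x % p ^ ((α + 1) / 2) = 0) := by
    apply Finset.filter_congr
    intro x _
    simp only [eq_iff_iff, ← Nat.dvd_iff_mod_eq_zero]
    exact pow_dvd_sq_iff p hp α x
  rw [hfil]
  have := card_residue (p ^ ((α + 1) / 2)) (p ^ (α / 2)) 0 hq hq
  rw [← hsplit] at this
  exact this

lemma int_fact_split (p : ℕ) (hp : p.Prime) (β' α : ℕ) (hα : 2 * β' < α)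
    (r x : ℕ) (hr : 1 ≤ r) (h2r : ¬ p ^ (β' + 1) ∣ 2 * r) (hrdvd : p ^ β' ∣ r) :
    ((p : ℤ) ^ α ∣ ((r : ℤ) - x) * ((r : ℤ) + x)) ↔
      ((p : ℤ) ^ (α - β') ∣ (r : ℤ) - x ∨ (p : ℤ) ^ (α - β') ∣ (r : ℤ) + x) := by
  constructor
  · intro h
    set A : ℕ := ((r : ℤ) - x).natAbs with hA
    set B : ℕ := r + x with hBdef
    have hBcast : ((r : ℤ) + x) = (B : ℤ) := by push_cast [hBdef]; ring
    have hB0 : B ≠ 0 := by omega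
    rcases eq_or_ne A 0 with hA0 | hA0
    · left
      have : (r : ℤ) - x = 0 := Int.natAbs_eq_zero.1 hA0
      simp [this]
    · have hAB : p ^ α ∣ A * B := by
        have h' := Int.natAbs_dvd_natAbs.2 h
        rwa [Int.natAbs_mul, Int.natAbs_pow, Int.natAbs_natCast, hBcast,
          Int.natAbs_natCast] at h'
      have hABne : A * B ≠ 0 := mul_ne_zero hA0 hB0
      have hfac : α ≤ A.factorization p + B.factorization p := by
        have := (hp.pow_dvd_iff_le_factorization hABne).1 hAB
        rwa [Nat.factorization_mul hA0 hB0, Finsupp.add_apply] at this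
      by_cases hAe : β' + 1 ≤ A.factorization p
      · have hdA : ((p : ℤ) ^ (β' + 1)) ∣ (r : ℤ) - x := by
          have : p ^ (β' + 1) ∣ A := (hp.pow_dvd_iff_le_factorization hA0).2 hAe
          have := Int.natCast_dvd_natCast.2 this
          rw [Int.natCast_pow] at this
          exact Int.dvd_natAbs.1 (by rwa [← hA])
        have hnB : ¬ (β' + 1 ≤ B.factorization p) := by
          intro hBe
          apply h2r
          have hdB : ((p : ℤ) ^ (β' + 1)) ∣ (r : ℤ) + x := by
            have : p ^ (β' + 1) ∣ B := (hp.pow_dvd_iff_le_factorization hB0).2 hBe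
            rw [hBcast]
            exact_mod_cast Int.natCast_dvd_natCast.2 this
          have h2 : ((p : ℤ) ^ (β' + 1)) ∣ ((2 * r : ℕ) : ℤ) := by
            have := dvd_add hdA hdB
            have he : ((r : ℤ) - x) + ((r : ℤ) + x) = ((2 * r : ℕ) : ℤ) := by
              push_cast; ring
            rwa [he] at this
          exact_mod_cast h2
        left
        have hge : α - β' ≤ A.factorization p := by omega
        have : p ^ (α - β') ∣ A := (hp.pow_dvd_iff_le_factorization hA0).2 hge
        have := Int.natCast_dvd_natCast.2 this
        rw [Int.natCast_pow] at this
        exact Int.dvd_natAbs.1 (by rwa [← hA])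
      · right
        have hge : α - β' ≤ B.factorization p := by omega
        have : p ^ (α - β') ∣ B := (hp.pow_dvd_iff_le_factorization hB0).2 hge
        rw [hBcast]
        exact_mod_cast Int.natCast_dvd_natCast.2 this
  · have hsplit : (p : ℤ) ^ α = (p : ℤ) ^ (α - β') * (p : ℤ) ^ β' := by
      rw [← pow_add]; congr 1; omega
    have hpr : (p : ℤ) ^ β' ∣ (r : ℤ) := by exact_mod_cast Int.natCast_dvd_natCast.2 hrdvd
    have hpq : (p : ℤ) ^ β' ∣ (p : ℤ) ^ (α - β') := pow_dvd_pow _ (by omega)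
    rintro (h | h)
    · have h2 : (p : ℤ) ^ β' ∣ (r : ℤ) + x := by
        have h3 : (r : ℤ) + x = 2 * r - ((r : ℤ) - x) := by ring
        rw [h3]
        exact dvd_sub (Dvd.dvd.mul_left hpr 2) (hpq.trans h)
      rw [hsplit]
      exact mul_dvd_mul h h2
    · have h2 : (p : ℤ) ^ β' ∣ (r : ℤ) - x := by
        have h3 : (r : ℤ) - x = 2 * r - ((r : ℤ) + x) := by ring
        rw [h3]
        exact dvd_sub (Dvd.dvd.mul_left hpr 2) (hpq.trans h)
      have hsplit2 : (p : ℤ) ^ α = (p : ℤ) ^ β' * (p : ℤ) ^ (α - β') := by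
        rw [← pow_add]; congr 1; omega
      rw [hsplit2]
      exact mul_dvd_mul h2 h

lemma rho_high (p : ℕ) (hp : p.Prime) (hodd : Odd p) (r β' : ℕ) (hr : 1 ≤ r)
    (hv : r.factorization p = β') (α : ℕ) (hα : 2 * β' < α) :
    rho (r ^ 2) (p ^ α) = 2 * p ^ β' := by
  have hppos : 0 < p := hp.pos
  have hp2 : p ≠ 2 := by
    rintro rfl
    rw [Nat.odd_iff] at hodd
    omega
  have h2rfac : (2 * r).factorization p = β' := by
    rw [Nat.factorization_mul (by norm_num) (by omega), Finsupp.add_apply,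
      Nat.factorization_eq_zero_of_not_dvd
        (fun h => hp2 ((Nat.prime_dvd_prime_iff_eq hp Nat.prime_two).1 h)), hv]
    omega
  have h2r : ¬ p ^ (β' + 1) ∣ 2 * r := by
    rw [hp.pow_dvd_iff_le_factorization (by omega), h2rfac]
    omega
  have hrdvd : p ^ β' ∣ r := by
    rw [hp.pow_dvd_iff_le_factorization (by omega), hv]
  set q : ℕ := p ^ (α - β') with hqdef
  set m : ℕ := p ^ β' with hmdef
  have hq1 : 1 < q := by
    apply Nat.one_lt_pow (by omega) hp.one_lt
  have hq0 : 0 < q := by omega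
  have hqm : p ^ α = q * m := by
    rw [hqdef, hmdef, ← pow_add]; congr 1; omega
  have hq2r : ¬ q ∣ 2 * r := by
    intro h
    exact h2r ((pow_dvd_pow p (by omega)).trans h)
  set a₁ : ℕ := r % q with ha₁
  have ha₁lt : a₁ < q := Nat.mod_lt _ hq0
  have ha₁0 : a₁ ≠ 0 := by
    intro h
    exact hq2r (Dvd.dvd.mul_left ((Nat.dvd_iff_mod_eq_zero.2 h)) 2)
  set a₂ : ℕ := q - a₁ with ha₂
  have ha₂lt : a₂ < q := by omega
  have hne : a₁ ≠ a₂ := by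
    intro h
    apply hq2r
    have hdiv := Nat.div_add_mod r q
    have h2a : 2 * a₁ = q := by omega
    refine ⟨2 * (r / q) + 1, ?_⟩
    have e1 : q * (2 * (r / q) + 1) = 2 * (q * (r / q)) + q := by ring
    omega
  have hqcast : ((q : ℕ) : ℤ) = (p : ℤ) ^ (α - β') := by
    rw [hqdef]; push_cast; ring
  have hpred : ∀ x : ℕ, (x ^ 2 % p ^ α = r ^ 2 % p ^ α) ↔ (x % q = a₁ ∨ x % q = a₂) := by
    intro x
    have step1 : (x ^ 2 % p ^ α = r ^ 2 % p ^ α) ↔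
        ((p : ℤ) ^ α ∣ ((r : ℤ) - x) * ((r : ℤ) + x)) := by
      have h1 : (x ^ 2 % p ^ α = r ^ 2 % p ^ α) ↔
          ((p ^ α : ℕ) : ℤ) ∣ ((r ^ 2 : ℕ) : ℤ) - ((x ^ 2 : ℕ) : ℤ) := Nat.modEq_iff_dvd
      rw [h1]
      push_cast
      constructor <;> intro h
      · rwa [show ((r : ℤ) - x) * ((r : ℤ) + x) = (r : ℤ) ^ 2 - (x : ℤ) ^ 2 from by ring]
      · rwa [show (r : ℤ) ^ 2 - (x : ℤ) ^ 2 = ((r : ℤ) - x) * ((r : ℤ) + x) from by ring]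
    have step2 := int_fact_split p hp β' α hα r x hr h2r hrdvd
    have left_iff : ((p : ℤ) ^ (α - β') ∣ (r : ℤ) - x) ↔ x % q = a₁ := by
      have h1 : Nat.ModEq q x r ↔ ((q : ℕ) : ℤ) ∣ ((r : ℕ) : ℤ) - ((x : ℕ) : ℤ) :=
        Nat.modEq_iff_dvd
      rw [hqcast] at h1
      exact h1.symm
    have right_iff : ((p : ℤ) ^ (α - β') ∣ (r : ℤ) + x) ↔ x % q = a₂ := by
      have hcast : ((r : ℤ) + x) = (((r + x : ℕ) : ℕ) : ℤ) := by push_cast; ring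
      rw [hcast, ← hqcast, Int.natCast_dvd_natCast]
      have hmod := Nat.add_mod r x q
      have hu : x % q < q := Nat.mod_lt _ hq0
      constructor
      · intro h
        have h0 : (r + x) % q = 0 := Nat.mod_eq_zero_of_dvd h
        rw [hmod] at h0
        have hdvd2 : q ∣ r % q + x % q := Nat.dvd_iff_mod_eq_zero.2 h0
        have heq : r % q + x % q = q :=
          Nat.eq_of_dvd_of_lt_two_mul (by omega) hdvd2 (by omega)
        omega
      · intro h
        have heq : r % q + x % q = q := by omega
        have h0 : (r + x) % q = 0 := by rw [hmod, heq, Nat.mod_self]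
        exact Nat.dvd_iff_mod_eq_zero.2 h0
    rw [step1, step2, left_iff, right_iff]
  unfold rho
  have hfil : (Finset.range (p ^ α)).filter (fun x => x ^ 2 % p ^ α = r ^ 2 % p ^ α)
      = (Finset.range (q * m)).filter (fun x => x % q = a₁ ∨ x % q = a₂) := by
    rw [← hqm]
    apply Finset.filter_congr
    intro x _
    exact hpred x
  rw [hfil, Finset.filter_or, Finset.card_union_of_disjoint, card_residue q m a₁ hq0 ha₁lt,
    card_residue q m a₂ hq0 ha₂lt]
  · omega
  · rw [Finset.disjoint_left]
    intro x hx1 hx2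
    simp only [Finset.mem_filter] at hx1 hx2
    exact hne (hx1.2 ▸ hx2.2)

lemma finite_part (p : ℝ) (hp1 : 1 < p) (b : ℕ) :
    ∑ α ∈ Finset.range (2 * b + 1), p ^ (α / 2) * p⁻¹ ^ α
      + 2 * p ^ b * p⁻¹ ^ (2 * b + 1) * (1 - p⁻¹)⁻¹
      = (1 + p⁻¹) * (1 - p⁻¹)⁻¹ := by
  have hp0 : p ≠ 0 := by linarith
  have hpc : p * p⁻¹ = 1 := mul_inv_cancel₀ hp0
  have hc1 : p⁻¹ < 1 := by
    rw [inv_lt_one_iff₀]; right; exact hp1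
  have h1c : (1 : ℝ) - p⁻¹ ≠ 0 := by
    have : 0 < p⁻¹ := by positivity
    intro h; nlinarith
  have helper1 : ∀ n : ℕ, p ^ n * p⁻¹ ^ (2 * n + 1) = p⁻¹ ^ (n + 1) := by
    intro n
    rw [show 2 * n + 1 = n + (n + 1) by omega, pow_add, ← mul_assoc, ← mul_pow, hpc,
      one_pow, one_mul]
  have helper2 : ∀ n : ℕ, p ^ n * p⁻¹ ^ (2 * n) = p⁻¹ ^ n := by
    intro n
    rw [two_mul, pow_add, ← mul_assoc, ← mul_pow, hpc, one_pow, one_mul]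
  induction b with
  | zero =>
    simp only [Nat.mul_zero, Nat.zero_add, Finset.sum_range_one, pow_zero, Nat.zero_div,
      one_mul, mul_one, pow_one]
    have hpm : p - 1 ≠ 0 := by linarith
    field_simp
    ring
  | succ b IH =>
    rw [show 2 * (b + 1) + 1 = (2 * b + 1) + 1 + 1 by omega, Finset.sum_range_succ,
      Finset.sum_range_succ]
    have e1 : ((2 * b + 1) : ℕ) / 2 = b := by omega
    have e2 : ((2 * b + 1 + 1) : ℕ) / 2 = b + 1 := by omega
    rw [e1, e2]
    have f1 : p ^ b * p⁻¹ ^ (2 * b + 1) = p⁻¹ ^ (b + 1) := helper1 b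
    have f2 : p ^ (b + 1) * p⁻¹ ^ (2 * b + 1 + 1) = p⁻¹ ^ (b + 1) := by
      rw [show 2 * b + 1 + 1 = 2 * (b + 1) by omega]; exact helper2 (b + 1)
    have f3 : 2 * p ^ (b + 1) * p⁻¹ ^ (2 * b + 1 + 1 + 1) * (1 - p⁻¹)⁻¹
        = 2 * p⁻¹ ^ (b + 1) * p⁻¹ * (1 - p⁻¹)⁻¹ := by
      have := helper1 (b + 1)
      rw [show 2 * b + 1 + 1 + 1 = 2 * (b + 1) + 1 by omega,
        show (2 : ℝ) * p ^ (b + 1) * p⁻¹ ^ (2 * (b + 1) + 1)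
          = 2 * (p ^ (b+1) * p⁻¹ ^ (2 * (b+1) + 1)) by ring,
        this]
      ring
    rw [f1, f2, f3]
    have expand : 2 * p ^ b * p⁻¹ ^ (2 * b + 1) * (1 - p⁻¹)⁻¹
        = 2 * p⁻¹ ^ (b + 1) + 2 * p⁻¹ ^ (b + 1) * p⁻¹ * (1 - p⁻¹)⁻¹ := by
      rw [show (2 : ℝ) * p ^ b * p⁻¹ ^ (2 * b + 1) = 2 * (p ^ b * p⁻¹ ^ (2 * b + 1)) by ring, f1]
      have key : (1 - p⁻¹)⁻¹ = 1 + p⁻¹ * (1 - p⁻¹)⁻¹ := by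
        linear_combination mul_inv_cancel₀ h1c
      linear_combination (2 * p⁻¹ ^ (b + 1)) * key
    rw [expand] at IH
    linarith

theorem stmt_7 (r : ℕ) (hr : 1 ≤ r) (p : ℕ) (hp : p.Prime) (hodd : Odd p)
    (hpr : p ∣ r) (β β' : ℕ) (hβ : β = 2 * β')
    (hdvd : p ^ β ∣ r ^ 2) (hndvd : ¬ p ^ (β + 1) ∣ r ^ 2) :
    (∑' α : ℕ, (rho (r ^ 2) (p ^ α) : ℝ) / p ^ α) =
      (1 + (p : ℝ)⁻¹) / (1 - (p : ℝ)⁻¹) := by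
  have hr0 : r ≠ 0 := by omega
  have hr2 : r ^ 2 ≠ 0 := pow_ne_zero _ hr0
  have hvfull : (r ^ 2).factorization p = 2 * r.factorization p := by
    rw [Nat.factorization_pow]; simp
  have hβle : β ≤ (r ^ 2).factorization p := (hp.pow_dvd_iff_le_factorization hr2).1 hdvd
  have hβgt : ¬ (β + 1 ≤ (r ^ 2).factorization p) := fun h =>
    hndvd ((hp.pow_dvd_iff_le_factorization hr2).2 h)
  have hv : r.factorization p = β' := by omega
  have hp1 : (1 : ℝ) < (p : ℝ) := by exact_mod_cast hp.one_lt
  have hc0 : (0 : ℝ) < (p : ℝ)⁻¹ := by positivity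
  have hc1 : (p : ℝ)⁻¹ < 1 := by rw [inv_lt_one_iff₀]; right; exact hp1
  have hrho : ∀ α : ℕ, ((rho (r ^ 2) (p ^ α) : ℝ) / (p : ℝ) ^ α)
      = if α ≤ 2 * β' then (p : ℝ) ^ (α / 2) * (p : ℝ)⁻¹ ^ α
        else 2 * (p : ℝ) ^ β' * (p : ℝ)⁻¹ ^ α := by
    intro α
    have hinv : (((p : ℝ)) ^ α)⁻¹ = (p : ℝ)⁻¹ ^ α := by rw [inv_pow]
    split_ifs with h
    · have hdvd' : p ^ α ∣ r ^ 2 := (pow_dvd_pow p (show α ≤ β by omega)).trans hdvd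
      rw [rho_low p hp α (r ^ 2) hdvd', div_eq_mul_inv, hinv]
      push_cast
      ring
    · rw [rho_high p hp hodd r β' hr hv α (by omega), div_eq_mul_inv, hinv]
      push_cast
      ring
  rw [tsum_congr hrho]
  have hsum : Summable (fun α : ℕ => if α ≤ 2 * β' then (p : ℝ) ^ (α / 2) * (p : ℝ)⁻¹ ^ α
      else 2 * (p : ℝ) ^ β' * (p : ℝ)⁻¹ ^ α) := by
    apply Summable.of_nonneg_of_le (f := fun α : ℕ => 2 * (p : ℝ) ^ β' * (p : ℝ)⁻¹ ^ α)
    · intro b; split_ifs <;> positivity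
    · intro b
      split_ifs with h
      · have h1 : (p : ℝ) ^ (b / 2) ≤ (p : ℝ) ^ β' :=
          pow_le_pow_right₀ (le_of_lt hp1) (by omega)
        have h2 : (0 : ℝ) ≤ (p : ℝ)⁻¹ ^ b := by positivity
        have h3 : (0 : ℝ) < (p : ℝ) ^ β' := by positivity
        have h4 : (p : ℝ) ^ (b / 2) ≤ 2 * (p : ℝ) ^ β' := by linarith
        exact mul_le_mul_of_nonneg_right h4 h2
      · exact le_refl _
    · exact (summable_geometric_of_lt_one hc0.le hc1).mul_left _
  rw [← hsum.sum_add_tsum_nat_add (2 * β' + 1)]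
  have htail : (∑' i : ℕ, (if i + (2 * β' + 1) ≤ 2 * β'
        then (p : ℝ) ^ ((i + (2 * β' + 1)) / 2) * (p : ℝ)⁻¹ ^ (i + (2 * β' + 1))
        else 2 * (p : ℝ) ^ β' * (p : ℝ)⁻¹ ^ (i + (2 * β' + 1))))
      = 2 * (p : ℝ) ^ β' * (p : ℝ)⁻¹ ^ (2 * β' + 1) * (1 - (p : ℝ)⁻¹)⁻¹ := by
    have hterm : ∀ i : ℕ, (if i + (2 * β' + 1) ≤ 2 * β'
        then (p : ℝ) ^ ((i + (2 * β' + 1)) / 2) * (p : ℝ)⁻¹ ^ (i + (2 * β' + 1))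
        else 2 * (p : ℝ) ^ β' * (p : ℝ)⁻¹ ^ (i + (2 * β' + 1)))
        = (2 * (p : ℝ) ^ β' * (p : ℝ)⁻¹ ^ (2 * β' + 1)) * (p : ℝ)⁻¹ ^ i := by
      intro i
      rw [if_neg (by omega), pow_add]
      ring
    rw [tsum_congr hterm, tsum_mul_left, tsum_geometric_of_lt_one hc0.le hc1]
  rw [htail]
  have hfin : (∑ α ∈ Finset.range (2 * β' + 1), (if α ≤ 2 * β'
        then (p : ℝ) ^ (α / 2) * (p : ℝ)⁻¹ ^ α
        else 2 * (p : ℝ) ^ β' * (p : ℝ)⁻¹ ^ α))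
      = ∑ α ∈ Finset.range (2 * β' + 1), (p : ℝ) ^ (α / 2) * (p : ℝ)⁻¹ ^ α := by
    apply Finset.sum_congr rfl
    intro α hα
    rw [Finset.mem_range] at hα
    rw [if_pos (by omega)]
  rw [hfin, div_eq_mul_inv]
  exact finite_part (p : ℝ) hp1 β'
end

section
/- Fix an integer r ≥ 1 with 2^t exactly dividing r², t = 2t′. Then A_2(1) = ∑_{α≥0} ρ_{r²}(2^α)/2^α = 3. -/
open Finset

/-- Counting elements of `range (d*m)` satisfying a predicate that only depends on `· % d`. -/
lemma card_filter_mod (d m : ℕ) (hd : 0 < d) (P : ℕ → Prop) [DecidablePred P]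
    (hP : ∀ w, P w ↔ P (w % d)) :
    ((range (d * m)).filter P).card = m * ((range d).filter P).card := by
  have hbij : ((range (d * m)).filter P).card
      = ((range m) ×ˢ ((range d).filter P)).card := by
    apply Finset.card_bij' (fun w _ => ((w / d, w % d) : ℕ × ℕ))
        (fun p _ => d * p.1 + p.2)
    · intro w hw
      simp only [mem_filter, mem_range, mem_product] at hw ⊢
      refine ⟨(Nat.div_lt_iff_lt_mul hd).2 ?_, Nat.mod_lt _ hd, (hP w).1 hw.2⟩
      rw [mul_comm]; exact hw.1
    · intro p hp
      simp only [mem_filter, mem_range, mem_product] at hp ⊢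
      constructor
      · calc d * p.1 + p.2 < d * p.1 + d := by omega
          _ = d * (p.1 + 1) := by ring
          _ ≤ d * m := Nat.mul_le_mul_left _ (by omega)
      · rw [hP, Nat.mul_add_mod, Nat.mod_eq_of_lt hp.2.1]
        exact hp.2.2
    · intro w _; exact Nat.div_add_mod w d
    · intro p hp
      simp only [mem_filter, mem_range, mem_product] at hp
      have h1 : (d * p.1 + p.2) / d = p.1 := by
        rw [Nat.mul_add_div hd, Nat.div_eq_of_lt hp.2.1, add_zero]
      have h2 : (d * p.1 + p.2) % d = p.2 := by
        rw [Nat.mul_add_mod, Nat.mod_eq_of_lt hp.2.1]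
      simp [h1, h2]
  rw [hbij, Finset.card_product, Finset.card_range]

lemma card_filter_dvd (d m : ℕ) (hd : 0 < d) :
    ((range (d * m)).filter (fun x => d ∣ x)).card = m := by
  rw [card_filter_mod d m hd _ (fun w => (Nat.dvd_mod_iff dvd_rfl).symm)]
  have h1 : (range d).filter (fun x => d ∣ x) = {0} := by
    ext x
    simp only [mem_filter, mem_range, mem_singleton]
    constructor
    · rintro ⟨h1, h2⟩; exact Nat.eq_zero_of_dvd_of_lt h2 h1
    · rintro rfl; exact ⟨hd, dvd_zero d⟩
  rw [h1, Finset.card_singleton, mul_one]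

lemma two_pow_dvd_sq_iff (α x : ℕ) : 2 ^ α ∣ x ^ 2 ↔ 2 ^ ((α + 1) / 2) ∣ x := by
  rcases eq_or_ne x 0 with rfl | hx
  · simp
  constructor
  · intro h
    have h2 : x ^ 2 ≠ 0 := pow_ne_zero _ hx
    rw [Nat.Prime.pow_dvd_iff_le_factorization Nat.prime_two h2, Nat.factorization_pow,
      Finsupp.smul_apply, smul_eq_mul] at h
    rw [Nat.Prime.pow_dvd_iff_le_factorization Nat.prime_two hx]
    omega
  · intro h
    have h2 : (2 ^ ((α + 1) / 2)) ^ 2 ∣ x ^ 2 := pow_dvd_pow_of_dvd h 2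
    rw [← pow_mul] at h2
    exact dvd_trans (pow_dvd_pow 2 (by omega)) h2

lemma rho_zero_pow (α : ℕ) : rho 0 (2 ^ α) = 2 ^ (α / 2) := by
  unfold rho
  have hsplit : (2:ℕ) ^ α = 2 ^ ((α + 1) / 2) * 2 ^ (α / 2) := by
    rw [← pow_add]; congr 1; omega
  have hpred : ∀ x ∈ range (2 ^ α),
      (x ^ 2 % 2 ^ α = 0 % 2 ^ α) ↔ (2 ^ ((α + 1) / 2) ∣ x) := by
    intro x _
    rw [Nat.zero_mod, ← Nat.dvd_iff_mod_eq_zero, two_pow_dvd_sq_iff]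
  rw [Finset.filter_congr hpred]
  rw [hsplit]
  exact card_filter_dvd _ _ (Nat.pow_pos (by norm_num))

lemma rho_of_dvd {k d : ℕ} (h : d ∣ k) : rho k d = rho 0 d := by
  unfold rho
  congr 1
  apply Finset.filter_congr
  intro x _
  rw [Nat.zero_mod, Nat.mod_eq_zero_of_dvd h]

lemma rho_mul_sq_coprime (k u d : ℕ) (hd : 1 < d) (hu : Nat.Coprime u d) :
    rho (k * u ^ 2) d = rho k d := by
  unfold rho
  symm
  apply Finset.card_bij (fun x _ => (x * u) % d)
  · intro x hx
    simp only [mem_filter, mem_range] at hx ⊢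
    refine ⟨Nat.mod_lt _ (by omega), ?_⟩
    have h1 : x ^ 2 * u ^ 2 ≡ k * u ^ 2 [MOD d] := Nat.ModEq.mul_right _ hx.2
    calc ((x * u) % d) ^ 2 % d = (x * u) ^ 2 % d := (Nat.pow_mod _ _ _).symm
      _ = (x ^ 2 * u ^ 2) % d := by ring_nf
      _ = (k * u ^ 2) % d := h1
  · intro a ha b hb h
    simp only [mem_filter, mem_range] at ha hb
    have h' : a * u ≡ b * u [MOD d] := h
    have := Nat.ModEq.cancel_right_of_coprime (by rwa [Nat.coprime_comm] at hu) h'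
    rw [Nat.ModEq] at this
    rwa [Nat.mod_eq_of_lt ha.1, Nat.mod_eq_of_lt hb.1] at this
  · intro y hy
    simp only [mem_filter, mem_range] at hy
    obtain ⟨v, hv⟩ := Nat.exists_mul_mod_eq_one_of_coprime hu hd
    have huv : u * v ≡ 1 [MOD d] := by
      show u * v % d = 1 % d
      rw [hv.2, Nat.mod_eq_of_lt hd]
    refine ⟨(y * v) % d, ?_, ?_⟩
    · simp only [mem_filter, mem_range]
      refine ⟨Nat.mod_lt _ (by omega), ?_⟩
      have h1 : y ^ 2 * v ^ 2 ≡ (k * u ^ 2) * v ^ 2 [MOD d] := Nat.ModEq.mul_right _ hy.2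
      have h2 : k * (u * v) ^ 2 ≡ k * 1 ^ 2 [MOD d] := Nat.ModEq.mul_left k (huv.pow 2)
      calc ((y * v) % d) ^ 2 % d = (y * v) ^ 2 % d := (Nat.pow_mod _ _ _).symm
        _ = (y ^ 2 * v ^ 2) % d := by ring_nf
        _ = ((k * u ^ 2) * v ^ 2) % d := h1
        _ = (k * (u * v) ^ 2) % d := by ring_nf
        _ = (k * 1 ^ 2) % d := h2
        _ = k % d := by ring_nf
    · have h3 : y * (u * v) ≡ y * 1 [MOD d] := Nat.ModEq.mul_left y huv
      calc ((y * v) % d * u) % d = ((y * v) * u) % d := by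
            conv_rhs => rw [← Nat.mod_mul_mod]
        _ = (y * (u * v)) % d := by ring_nf
        _ = (y * 1) % d := h3
        _ = y := by rw [mul_one, Nat.mod_eq_of_lt hy.1]

/-- Structure of solutions of `x² ≡ 2^(2s) (mod 2^(2s+β))`. -/
lemma sol_decomp {s β x : ℕ} (hβ : 1 ≤ β) (hxlt : x < 2 ^ (2 * s + β))
    (hxeq : x ^ 2 % 2 ^ (2 * s + β) = 2 ^ (2 * s) % 2 ^ (2 * s + β)) :
    ∃ w, x = 2 ^ s * w ∧ w < 2 ^ (s + β) ∧ w ^ 2 % 2 ^ β = 1 % 2 ^ β := by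
  have hlt : (2:ℕ) ^ (2 * s) < 2 ^ (2 * s + β) := Nat.pow_lt_pow_right one_lt_two (by omega)
  rw [Nat.mod_eq_of_lt hlt] at hxeq
  have hdvd : 2 ^ (2 * s) ∣ x ^ 2 := by
    have h0 : x ^ 2 = 2 ^ (2 * s + β) * (x ^ 2 / 2 ^ (2 * s + β)) + 2 ^ (2 * s) := by
      conv_lhs => rw [← Nat.div_add_mod (x ^ 2) (2 ^ (2 * s + β))]
      rw [hxeq]
    rw [h0]
    exact dvd_add (dvd_mul_of_dvd_left (pow_dvd_pow 2 (by omega)) _) dvd_rfl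
  have hsx : 2 ^ s ∣ x := by
    have h1 := (two_pow_dvd_sq_iff (2 * s) x).1 hdvd
    rwa [show (2 * s + 1) / 2 = s from by omega] at h1
  obtain ⟨w, hw⟩ := hsx
  have hx2 : x ^ 2 = 2 ^ (2 * s) * w ^ 2 := by rw [hw]; ring
  refine ⟨w, hw, ?_, ?_⟩
  · have h2 : 2 ^ s * w < 2 ^ s * 2 ^ (s + β) := by
      rw [← hw, ← pow_add]
      rwa [show s + (s + β) = 2 * s + β from by omega]
    exact lt_of_mul_lt_mul_left h2 (Nat.zero_le _)
  · have hm : 2 ^ (2 * s) * w ^ 2 ≡ 2 ^ (2 * s) * 1 [MOD 2 ^ (2 * s) * 2 ^ β] := by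
      show (2 ^ (2 * s) * w ^ 2) % _ = (2 ^ (2 * s) * 1) % _
      rw [← pow_add, ← hx2, mul_one]
      rw [hxeq]
      exact (Nat.mod_eq_of_lt hlt).symm
    exact Nat.ModEq.mul_left_cancel' (by positivity) hm

lemma rho_sq_pow (s β : ℕ) (hβ : 1 ≤ β) :
    rho (2 ^ (2 * s)) (2 ^ (2 * s + β)) = 2 ^ s * rho 1 (2 ^ β) := by
  unfold rho
  have hlt : (2:ℕ) ^ (2 * s) < 2 ^ (2 * s + β) := Nat.pow_lt_pow_right one_lt_two (by omega)
  have hbij : ((range (2 ^ s)) ×ˢ ((range (2 ^ β)).filter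
        (fun y => y ^ 2 % 2 ^ β = 1 % 2 ^ β))).card
      = ((range (2 ^ (2 * s + β))).filter
        (fun x => x ^ 2 % 2 ^ (2 * s + β) = 2 ^ (2 * s) % 2 ^ (2 * s + β))).card := by
    apply Finset.card_bij (fun p _ => 2 ^ s * (2 ^ β * p.1 + p.2))
    · -- maps into the solution set
      rintro ⟨j, y⟩ hp
      simp only [mem_filter, mem_range, mem_product] at hp ⊢
      obtain ⟨hj, hy, hysol⟩ := hp
      constructor
      · calc 2 ^ s * (2 ^ β * j + y) < 2 ^ s * (2 ^ β * j + 2 ^ β) :=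
              (Nat.mul_lt_mul_left (by positivity)).2 (by omega)
          _ = 2 ^ s * (2 ^ β * (j + 1)) := by ring
          _ ≤ 2 ^ s * (2 ^ β * 2 ^ s) := by
              apply Nat.mul_le_mul_left
              exact Nat.mul_le_mul_left _ (by omega)
          _ = 2 ^ (2 * s + β) := by rw [← pow_add, ← pow_add]; congr 1; omega
      · set w := 2 ^ β * j + y with hwdef
        have hwmod : w % 2 ^ β = y := by rw [hwdef, Nat.mul_add_mod, Nat.mod_eq_of_lt hy]
        have hw1 : w ^ 2 ≡ 1 [MOD 2 ^ β] := by
          show w ^ 2 % 2 ^ β = 1 % 2 ^ β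
          rw [Nat.pow_mod, hwmod]
          exact hysol
        have hm : 2 ^ (2 * s) * w ^ 2 ≡ 2 ^ (2 * s) * 1 [MOD 2 ^ (2 * s) * 2 ^ β] :=
          Nat.ModEq.mul_left' _ hw1
        have hx2 : (2 ^ s * w) ^ 2 = 2 ^ (2 * s) * w ^ 2 := by ring
        show (2 ^ s * w) ^ 2 % 2 ^ (2 * s + β) = 2 ^ (2 * s) % 2 ^ (2 * s + β)
        rw [hx2]
        have := hm
        rw [Nat.ModEq, ← pow_add, mul_one] at this
        exact this
    · -- injective
      rintro ⟨j₁, y₁⟩ hp₁ ⟨j₂, y₂⟩ hp₂ h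
      simp only [mem_filter, mem_range, mem_product] at hp₁ hp₂
      have hpos : 0 < (2:ℕ) ^ s := by positivity
      have h1 : 2 ^ β * j₁ + y₁ = 2 ^ β * j₂ + y₂ := by
        have := h
        exact Nat.eq_of_mul_eq_mul_left hpos this
      have hy₁ := hp₁.2.1
      have hy₂ := hp₂.2.1
      have hj : j₁ = j₂ := by
        have e1 := congrArg (· / 2 ^ β) h1
        rwa [Nat.mul_add_div (by positivity), Nat.mul_add_div (by positivity),
          Nat.div_eq_of_lt hy₁, Nat.div_eq_of_lt hy₂, add_zero, add_zero] at e1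
      have hy : y₁ = y₂ := by
        have e2 := congrArg (· % 2 ^ β) h1
        rwa [Nat.mul_add_mod, Nat.mul_add_mod, Nat.mod_eq_of_lt hy₁,
          Nat.mod_eq_of_lt hy₂] at e2
      simp [hj, hy]
    · -- surjective
      intro x hx
      simp only [mem_filter, mem_range, mem_product] at hx
      obtain ⟨w, hw, hwlt, hwsol⟩ := sol_decomp hβ hx.1 hx.2
      refine ⟨(w / 2 ^ β, w % 2 ^ β), ?_, ?_⟩
      · simp only [mem_filter, mem_range, mem_product]
        refine ⟨?_, Nat.mod_lt _ (by positivity), ?_⟩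
        · rw [Nat.div_lt_iff_lt_mul (by positivity), ← pow_add]
          exact hwlt
        · rw [Nat.pow_mod, Nat.mod_mod_of_dvd _ dvd_rfl, ← Nat.pow_mod]
          exact hwsol
      · simp only
        rw [Nat.div_add_mod w (2 ^ β), ← hw]
  rw [← hbij, Finset.card_product, Finset.card_range]

lemma sq_mod_one_iff {β : ℕ} (hβ : 3 ≤ β) (y : ℕ) :
    y ^ 2 % 2 ^ β = 1 % 2 ^ β ↔
      (y % 2 ^ (β - 1) = 1 ∨ y % 2 ^ (β - 1) = 2 ^ (β - 1) - 1) := by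
  set P : ℕ := 2 ^ (β - 1) with hPdef
  have hP4 : 4 ≤ P := by
    calc (4:ℕ) = 2 ^ 2 := by norm_num
      _ ≤ 2 ^ (β - 1) := Nat.pow_le_pow_right (by norm_num) (by omega)
  have h2P : (2:ℕ) ^ β = 2 * P := by
    rw [hPdef, ← pow_succ']; congr 1; omega
  have hPZ : ((P:ℕ):ℤ) = 2 * 2 ^ (β - 2) := by
    rw [hPdef]; push_cast
    rw [← pow_succ']; congr 1; omega
  constructor
  · intro h
    have hme : y ^ 2 ≡ 1 [MOD 2 ^ β] := h
    have hdvd : ((2:ℤ) ^ β) ∣ (y:ℤ) ^ 2 - 1 := by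
      have h1 := (Nat.modEq_iff_dvd).1 hme
      push_cast at h1
      exact dvd_sub_comm.1 h1
    rcases Int.even_or_odd (y:ℤ) with he | ho
    · exfalso
      obtain ⟨c, hc⟩ := he
      have h2 : (2:ℤ) ∣ (y:ℤ) ^ 2 - 1 :=
        dvd_trans (dvd_pow_self 2 (by omega : β ≠ 0)) hdvd
      obtain ⟨k, hk⟩ := h2
      rw [hc] at hk
      have h5 : (2:ℤ) ∣ 2 * k + 1 := ⟨2 * c ^ 2, by linear_combination -hk⟩
      omega
    · obtain ⟨c, hc⟩ := ho
      have h4 : (y:ℤ) ^ 2 - 1 = 4 * (c * (c + 1)) := by rw [hc]; ring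
      have hdvd2 : (4:ℤ) * 2 ^ (β - 2) ∣ 4 * (c * (c + 1)) := by
        rw [← h4]
        have h6 : (2:ℤ) ^ β = 4 * 2 ^ (β - 2) := by
          rw [show (4:ℤ) = 2 ^ 2 from by norm_num, ← pow_add]
          congr 1; omega
        rw [← h6]; exact hdvd
      have hdvd3 : (2:ℤ) ^ (β - 2) ∣ c * (c + 1) :=
        (mul_dvd_mul_iff_left (by norm_num : (4:ℤ) ≠ 0)).1 hdvd2
      rcases Int.even_or_odd c with hce | hco
      · -- c even, so 2^(β-2) ∣ c, y ≡ 1 mod P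
        left
        have hcop : IsCoprime ((2:ℤ) ^ (β - 2)) (c + 1) := by
          apply IsCoprime.pow_left
          rw [Int.prime_two.coprime_iff_not_dvd]
          intro hdd
          obtain ⟨e, he⟩ := hce
          obtain ⟨f, hf⟩ := hdd
          omega
        have hc' : (2:ℤ) ^ (β - 2) ∣ c := hcop.dvd_of_dvd_mul_right hdvd3
        obtain ⟨g, hg⟩ := hc'
        have hP1 : ((P:ℕ):ℤ) ∣ (y:ℤ) - 1 := by
          rw [hPZ]
          exact ⟨g, by rw [hc, hg]; ring⟩
        have hm2 : y ≡ 1 [MOD P] := by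
          rw [Nat.modEq_iff_dvd]
          push_cast
          exact dvd_sub_comm.1 (by push_cast at hP1; exact hP1)
        have h7 : y % P = 1 % P := hm2
        rwa [Nat.mod_eq_of_lt (by omega : 1 < P)] at h7
      · -- c odd, so 2^(β-2) ∣ c+1, y ≡ -1 mod P
        right
        have hcop : IsCoprime ((2:ℤ) ^ (β - 2)) c := by
          apply IsCoprime.pow_left
          rw [Int.prime_two.coprime_iff_not_dvd]
          intro hdd
          obtain ⟨e, he⟩ := hco
          obtain ⟨f, hf⟩ := hdd
          omega
        have hc' : (2:ℤ) ^ (β - 2) ∣ c + 1 := by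
          apply hcop.dvd_of_dvd_mul_right
          rw [mul_comm] at hdvd3
          exact hdvd3
        obtain ⟨g, hg⟩ := hc'
        have hP1 : ((P:ℕ):ℤ) ∣ (y:ℤ) + 1 := by
          rw [hPZ]
          exact ⟨g, by rw [hc]; linear_combination 2 * hg⟩
        have hm2 : y ≡ P - 1 [MOD P] := by
          rw [Nat.modEq_iff_dvd]
          have hsub : ((P - 1 : ℕ) : ℤ) = (P:ℤ) - 1 := by
            have : (1:ℕ) ≤ P := by omega
            push_cast [this]
            ring
          push_cast [hsub]
          have hfin : ((P:ℕ):ℤ) ∣ (P:ℤ) - ((y:ℤ) + 1) := dvd_sub dvd_rfl hP1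
          have : ((P:ℤ) - 1) - (y:ℤ) = (P:ℤ) - ((y:ℤ) + 1) := by ring
          rw [this]
          exact hfin
        have h7 : y % P = (P - 1) % P := hm2
        rwa [Nat.mod_eq_of_lt (by omega : P - 1 < P)] at h7
  · intro h
    have key : ((2:ℤ) ^ β) ∣ (y:ℤ) ^ 2 - 1 → y ^ 2 % 2 ^ β = 1 % 2 ^ β := by
      intro hd
      have hme : y ^ 2 ≡ 1 [MOD 2 ^ β] := by
        rw [Nat.modEq_iff_dvd]
        push_cast
        exact dvd_sub_comm.1 hd
      exact hme
    apply key
    have h2Pz : (2:ℤ) ^ β = 2 * (P:ℤ) := by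
      rw [hPZ, show (2:ℤ) * (2 * 2 ^ (β - 2)) = 2 ^ 2 * 2 ^ (β - 2) from by ring, ← pow_add]
      congr 1; omega
    rcases h with h1 | h1
    · -- y ≡ 1 mod P
      have hPy : ((P:ℕ):ℤ) ∣ (y:ℤ) - 1 := by
        have hm2 : y ≡ 1 [MOD P] := by
          show y % P = 1 % P
          rw [h1, Nat.mod_eq_of_lt (by omega : 1 < P)]
        have := (Nat.modEq_iff_dvd).1 hm2
        push_cast at this ⊢
        exact dvd_sub_comm.1 this
      obtain ⟨q, hq⟩ := hPy
      have hodd : (2:ℤ) ∣ (y:ℤ) + 1 := by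
        refine ⟨2 ^ (β - 2) * q + 1, ?_⟩
        have : (y:ℤ) + 1 = ((y:ℤ) - 1) + 2 := by ring
        rw [this, hq, hPZ]
        ring
      rw [h2Pz]
      have hfact : (y:ℤ) ^ 2 - 1 = ((y:ℤ) + 1) * ((y:ℤ) - 1) := by ring
      rw [hfact]
      exact mul_dvd_mul hodd ⟨q, hq⟩
    · -- y ≡ P - 1 mod P
      have hsub : ((P - 1 : ℕ) : ℤ) = (P:ℤ) - 1 := by
        have h9 : (1:ℕ) ≤ P := by omega
        push_cast [h9]
        ring
      have hPy : ((P:ℕ):ℤ) ∣ (y:ℤ) + 1 := by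
        have hm2 : y ≡ P - 1 [MOD P] := by
          show y % P = (P - 1) % P
          rw [h1, Nat.mod_eq_of_lt (by omega : P - 1 < P)]
        have h8 := (Nat.modEq_iff_dvd).1 hm2
        -- h8 : (P:ℤ) ∣ ((P-1:ℕ):ℤ) - y
        rw [hsub] at h8
        have h10 : (y:ℤ) + 1 = (P:ℤ) - (((P:ℤ) - 1) - (y:ℤ)) := by ring
        rw [h10]
        exact dvd_sub dvd_rfl h8
      obtain ⟨q, hq⟩ := hPy
      have hodd : (2:ℤ) ∣ (y:ℤ) - 1 := by
        refine ⟨2 ^ (β - 2) * q - 1, ?_⟩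
        have h11 : (y:ℤ) - 1 = ((y:ℤ) + 1) - 2 := by ring
        rw [h11, hq, hPZ]
        ring
      rw [h2Pz]
      have hfact : (y:ℤ) ^ 2 - 1 = ((y:ℤ) + 1) * ((y:ℤ) - 1) := by ring
      rw [hfact, mul_comm (2:ℤ) ((P:ℕ):ℤ)]
      exact mul_dvd_mul ⟨q, hq⟩ hodd

lemma rho_one_pow (β : ℕ) (hβ : 3 ≤ β) : rho 1 (2 ^ β) = 4 := by
  unfold rho
  set P : ℕ := 2 ^ (β - 1) with hPdef
  have hP4 : 4 ≤ P := by
    calc (4:ℕ) = 2 ^ 2 := by norm_num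
      _ ≤ 2 ^ (β - 1) := Nat.pow_le_pow_right (by norm_num) (by omega)
  have h2P : (2:ℕ) ^ β = P * 2 := by
    rw [hPdef, ← pow_succ]; congr 1; omega
  have heq : (range (2 ^ β)).filter (fun x => x ^ 2 % 2 ^ β = 1 % 2 ^ β)
      = (range (2 ^ β)).filter (fun x => x % P = 1 ∨ x % P = P - 1) := by
    apply Finset.filter_congr
    intro x _
    exact sq_mod_one_iff hβ x
  rw [heq, h2P, card_filter_mod P 2 (by omega) _
    (fun w => by rw [Nat.mod_mod_of_dvd w dvd_rfl])]
  have hset : (range P).filter (fun x => x % P = 1 ∨ x % P = P - 1) = {1, P - 1} := by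
    ext x
    simp only [mem_filter, mem_range, mem_insert, mem_singleton]
    constructor
    · rintro ⟨hx, h1 | h1⟩
      · left; rw [← h1, Nat.mod_eq_of_lt hx]
      · right; rw [← h1, Nat.mod_eq_of_lt hx]
    · rintro (rfl | rfl)
      · exact ⟨by omega, Or.inl (Nat.mod_eq_of_lt (by omega))⟩
      · exact ⟨by omega, Or.inr (Nat.mod_eq_of_lt (by omega))⟩
  rw [hset]
  rw [Finset.card_insert_of_notMem (by simp only [mem_singleton]; omega),
    Finset.card_singleton]

lemma geom_half_sum (m : ℕ) :
    ∑ i ∈ Finset.range (2 * m + 1), ((2:ℝ) ^ (i / 2)) / 2 ^ i = 3 - 2 / 2 ^ m := by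
  induction m with
  | zero => norm_num
  | succ n ih =>
    rw [show 2 * (n + 1) + 1 = 2 * n + 1 + 1 + 1 from by omega,
      Finset.sum_range_succ, Finset.sum_range_succ, ih]
    have e1 : (2 * n + 1) / 2 = n := by omega
    have e2 : (2 * n + 1 + 1) / 2 = n + 1 := by omega
    rw [e1, e2]
    have hx : (2:ℝ) ^ n ≠ 0 := by positivity
    have p1 : (2:ℝ) ^ (2 * n + 1) = 2 ^ n * 2 ^ n * 2 := by
      rw [show 2 * n + 1 = n + n + 1 from by omega]; ring
    have p2 : (2:ℝ) ^ (2 * n + 1 + 1) = 2 ^ n * 2 ^ n * 4 := by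
      rw [show 2 * n + 1 + 1 = n + n + 2 from by omega]; ring
    have p3 : (2:ℝ) ^ (n + 1) = 2 ^ n * 2 := by rw [pow_succ]
    rw [p1, p2, p3]
    field_simp
    ring

theorem stmt_8 (r : ℕ) (hr : 1 ≤ r) (t t' : ℕ) (ht : t = 2 * t')
    (hdvd : 2 ^ t ∣ r ^ 2) (hndvd : ¬ 2 ^ (t + 1) ∣ r ^ 2) :
    (∑' α : ℕ, (rho (r ^ 2) (2 ^ α) : ℝ) / 2 ^ α) = 3 := by
  subst ht
  set s := t' with hs
  -- r = 2^s * u with u odd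
  have hsr : 2 ^ s ∣ r := by
    have h2s : (2 ^ s) ^ 2 ∣ r ^ 2 := by
      rw [← pow_mul, mul_comm s 2]
      exact hdvd
    exact (Nat.pow_dvd_pow_iff (by norm_num : (2:ℕ) ≠ 0)).mp h2s
  obtain ⟨u, hu⟩ := hsr
  have huodd : u % 2 = 1 := by
    by_contra hco
    have h2u : 2 ∣ u := by omega
    obtain ⟨w, hw⟩ := h2u
    apply hndvd
    refine ⟨2 * w ^ 2, ?_⟩
    rw [hu, hw]
    ring
  have hru : r ^ 2 = 2 ^ (2 * s) * u ^ 2 := by rw [hu]; ring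
  have hcop : ∀ m : ℕ, Nat.Coprime u (2 ^ m) := by
    intro m
    apply Nat.Coprime.pow_right
    rw [Nat.coprime_comm]
    exact (Nat.prime_two.coprime_iff_not_dvd).mpr (by omega)
  have key0 : ∀ α : ℕ, 1 ≤ α → rho (r ^ 2) (2 ^ α) = rho (2 ^ (2 * s)) (2 ^ α) := by
    intro α hα
    rw [hru, rho_mul_sq_coprime _ _ _ (Nat.one_lt_two_pow_iff.mpr (by omega)) (hcop α)]
  have keyA : ∀ α : ℕ, α ≤ 2 * s → rho (r ^ 2) (2 ^ α) = 2 ^ (α / 2) := by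
    intro α hα
    rcases Nat.eq_zero_or_pos α with rfl | hα1
    · simp [rho, Nat.mod_one]
    · rw [key0 α hα1, rho_of_dvd (pow_dvd_pow 2 hα), rho_zero_pow]
  have keyB : ∀ β : ℕ, 1 ≤ β → rho (r ^ 2) (2 ^ (2 * s + β)) = 2 ^ s * rho 1 (2 ^ β) := by
    intro β hβ
    rw [key0 _ (by omega), rho_sq_pow s β hβ]
  have keyB1 : rho (r ^ 2) (2 ^ (2 * s + 1)) = 2 ^ s := by
    rw [keyB 1 le_rfl, show rho 1 (2 ^ 1) = 1 from by decide, mul_one]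
  have keyB2 : rho (r ^ 2) (2 ^ (2 * s + 2)) = 2 ^ s * 2 := by
    rw [keyB 2 (by omega), show rho 1 (2 ^ 2) = 2 from by decide]
  have keyB3 : ∀ β : ℕ, 3 ≤ β → rho (r ^ 2) (2 ^ (2 * s + β)) = 2 ^ s * 4 := by
    intro β hβ
    rw [keyB β (by omega), rho_one_pow β hβ]
  set f : ℕ → ℝ := fun α => (rho (r ^ 2) (2 ^ α) : ℝ) / 2 ^ α with hf
  have hftail : (fun n => f (n + (2 * s + 3)))
      = fun n => ((2 ^ s * 4 : ℝ) / 2 ^ (2 * s + 3)) * (1 / 2 : ℝ) ^ n := by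
    funext n
    have h1 : rho (r ^ 2) (2 ^ (n + (2 * s + 3))) = 2 ^ s * 4 := by
      rw [show n + (2 * s + 3) = 2 * s + (n + 3) from by omega]
      exact keyB3 _ (by omega)
    show (rho (r ^ 2) (2 ^ (n + (2 * s + 3))) : ℝ) / 2 ^ (n + (2 * s + 3)) = _
    rw [h1, pow_add]
    push_cast
    field_simp
    ring_nf
    simp [← mul_pow]
  have hsum : Summable f := by
    rw [← summable_nat_add_iff (2 * s + 3)]
    rw [hftail]
    exact (summable_geometric_of_lt_one (by norm_num) (by norm_num)).mul_left _
  have htail : ∑' n : ℕ, f (n + (2 * s + 3)) = (1:ℝ) / 2 ^ s := by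
    rw [hftail, tsum_mul_left, tsum_geometric_of_lt_one (by norm_num) (by norm_num)]
    have hx : (2:ℝ) ^ s ≠ 0 := by positivity
    have p1 : (2:ℝ) ^ (2 * s + 3) = 2 ^ s * 2 ^ s * 8 := by
      rw [show 2 * s + 3 = s + s + 3 from by omega]; ring
    rw [p1]
    field_simp
    ring
  have hfin : ∑ i ∈ Finset.range (2 * s + 3), f i = 3 - 1 / (2:ℝ) ^ s := by
    rw [show 2 * s + 3 = 2 * s + 1 + 1 + 1 from by omega,
      Finset.sum_range_succ, Finset.sum_range_succ]
    have hA : ∑ i ∈ Finset.range (2 * s + 1), f i = 3 - 2 / 2 ^ s := by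
      rw [← geom_half_sum s]
      apply Finset.sum_congr rfl
      intro i hi
      rw [Finset.mem_range] at hi
      show (rho (r ^ 2) (2 ^ i) : ℝ) / 2 ^ i = _
      rw [keyA i (by omega)]
      push_cast
      ring
    have hB1 : f (2 * s + 1) = (2 ^ s : ℝ) / 2 ^ (2 * s + 1) := by
      show (rho (r ^ 2) (2 ^ (2 * s + 1)) : ℝ) / 2 ^ (2 * s + 1) = _
      rw [keyB1]
      push_cast
      ring
    have hB2 : f (2 * s + 1 + 1) = (2 ^ s * 2 : ℝ) / 2 ^ (2 * s + 2) := by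
      show (rho (r ^ 2) (2 ^ (2 * s + 1 + 1)) : ℝ) / 2 ^ (2 * s + 1 + 1) = _
      rw [show 2 * s + 1 + 1 = 2 * s + 2 from by omega, keyB2]
      push_cast
      ring
    rw [hA, hB1, hB2]
    have hx : (2:ℝ) ^ s ≠ 0 := by positivity
    have p1 : (2:ℝ) ^ (2 * s + 1) = 2 ^ s * 2 ^ s * 2 := by
      rw [show 2 * s + 1 = s + s + 1 from by omega]; ring
    have p2 : (2:ℝ) ^ (2 * s + 2) = 2 ^ s * 2 ^ s * 4 := by
      rw [show 2 * s + 2 = s + s + 2 from by omega]; ring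
    rw [p1, p2]
    field_simp
    ring
  have hgoal : (∑' α : ℕ, f α) = 3 := by
    rw [← Summable.sum_add_tsum_nat_add (2 * s + 3) hsum, hfin, htail]
    have hx : (2:ℝ) ^ s ≠ 0 := by positivity
    field_simp
    ring
  exact hgoal
end

section
/- Fix an integer r ≥ 1 and let p be a prime with p ∣ r and p ≥ 5, with p^β ∥ r². Then for every integer α ≥ 1, ρ_{r²}(p^α) ≤ p^{α/2}. -/
open Finset

private lemma pm_dvd {p : ℕ} (hp : p.Prime) (hp2 : p ≠ 2) (m : ℕ) {y u : ℤ}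
    (hy : ¬ (p:ℤ) ∣ y) (h : (p:ℤ)^m ∣ y^2 - u^2) :
    (p:ℤ)^m ∣ y - u ∨ (p:ℤ)^m ∣ y + u := by
  have hq : Prime (p:ℤ) := Nat.prime_iff_prime_int.mp hp
  have hfac : y^2 - u^2 = (y - u) * (y + u) := by ring
  rw [hfac] at h
  by_cases hd : (p:ℤ) ∣ (y - u)
  · left
    have hnd : ¬ (p:ℤ) ∣ (y + u) := by
      intro h2
      have h2y : (p:ℤ) ∣ 2 * y := by
        have h3 := dvd_add hd h2
        have e : (y - u) + (y + u) = 2 * y := by ring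
        rwa [e] at h3
      rcases hq.dvd_mul.mp h2y with h3 | h3
      · have h4 : p ∣ 2 := by exact_mod_cast h3
        exact hp2 ((Nat.prime_dvd_prime_iff_eq hp Nat.prime_two).mp h4)
      · exact hy h3
    exact hq.pow_dvd_of_dvd_mul_right m hnd h
  · right
    exact hq.pow_dvd_of_dvd_mul_left m hd h

private lemma case1_count (p α c : ℕ) (hc : c ≤ α) (hp : 0 < p)
    (S : Finset ℕ) (hS : S ⊆ Finset.range (p^α)) (hdvd : ∀ x ∈ S, p^c ∣ x) :
    S.card ≤ p^(α - c) := by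
  classical
  have h := Finset.card_le_card_of_injOn (s := S) (t := Finset.range (p^(α-c)))
    (fun x => x / p^c) ?_ ?_
  · simpa using h
  · intro x hx
    have hxlt : x < p ^ α := Finset.mem_range.mp (hS hx)
    have hpc : 0 < p ^ c := pow_pos hp c
    simp only [Finset.mem_coe, Finset.mem_range]
    rw [Nat.div_lt_iff_lt_mul hpc]
    calc x < p ^ α := hxlt
    _ = p ^ (α - c) * p ^ c := by rw [← pow_add]; congr 1; omega
  · intro a ha b hb hab
    obtain ⟨a', rfl⟩ := hdvd a ha
    obtain ⟨b', rfl⟩ := hdvd b hb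
    have hpc : 0 < p ^ c := pow_pos hp c
    simp only [Nat.mul_div_cancel_left _ hpc] at hab
    rw [hab]

theorem stmt_9 (r : ℕ) (hr : 1 ≤ r) (p : ℕ) (hp : p.Prime) (hp5 : 5 ≤ p)
    (hpr : p ∣ r) (α : ℕ) (hα : 1 ≤ α) :
    (rho (r ^ 2) (p ^ α) : ℝ) ≤ (p : ℝ) ^ ((α : ℝ) / 2) := by
  classical
  have hp1 : 1 < p := hp.one_lt
  have hp1R : (1:ℝ) ≤ (p:ℝ) := by exact_mod_cast hp1.le
  have hppos : (0:ℝ) < (p:ℝ) := by positivity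
  have hr0 : r ≠ 0 := by omega
  set n := p ^ α with hn
  set S := (Finset.range n).filter (fun x => x ^ 2 % n = r ^ 2 % n) with hSdef
  have hrho : rho (r^2) n = S.card := rfl
  set t := r.factorization p with ht
  have htpos : 1 ≤ t :=
    (Nat.Prime.pow_dvd_iff_le_factorization hp hr0).mp (by simpa using hpr)
  have hordr : p ^ t ∣ r := Nat.ordProj_dvd r p
  set u := r / p ^ t with hu
  have hru : r = p ^ t * u := (Nat.mul_div_cancel' hordr).symm
  have hpu : ¬ p ∣ u := Nat.not_dvd_ordCompl hp hr0
  have hr2ne : r^2 ≠ 0 := pow_ne_zero _ hr0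
  have hfacr2 : (r^2).factorization p = 2 * t := by
    rw [Nat.factorization_pow]; simp [ht, mul_comm]
  have hSdvd : ∀ x ∈ S, (n:ℤ) ∣ (x:ℤ)^2 - (r:ℤ)^2 := by
    intro x hx
    have hmod : x^2 % n = r^2 % n := (Finset.mem_filter.mp hx).2
    have hme : (x^2 : ℕ) ≡ r^2 [MOD n] := hmod
    have hd := (Nat.modEq_iff_dvd.mp hme)
    have e : ((r^2 : ℕ) : ℤ) - ((x^2 : ℕ) : ℤ) = -(((x:ℤ))^2 - (r:ℤ)^2) := by push_cast; ring
    rw [e] at hd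
    exact (dvd_neg.mp hd)
  rw [hrho]
  by_cases hcase : α ≤ 2 * t
  · -- `p^α ∣ r²`, so solutions are multiples of `p^⌈α/2⌉`
    set c := (α + 1) / 2 with hc
    have hcle : c ≤ α := by omega
    have hr2dvd : p ^ α ∣ r ^ 2 :=
      (Nat.Prime.pow_dvd_iff_le_factorization hp hr2ne).mpr (by rw [hfacr2]; omega)
    have hdvd : ∀ x ∈ S, p ^ c ∣ x := by
      intro x hx
      have h1 := hSdvd x hx
      have h2 : (n:ℤ) ∣ (x:ℤ)^2 := by
        have h3 : (n:ℤ) ∣ (r:ℤ)^2 := by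
          rw [hn]
          have : ((p^α : ℕ) : ℤ) ∣ ((r^2 : ℕ) : ℤ) := Int.natCast_dvd_natCast.mpr hr2dvd
          push_cast at this; exact_mod_cast this
        have e : (x:ℤ)^2 = ((x:ℤ)^2 - (r:ℤ)^2) + (r:ℤ)^2 := by ring
        rw [e]; exact dvd_add h1 h3
      have h3 : p ^ α ∣ x ^ 2 := by
        rw [hn] at h2
        have : ((p^α : ℕ) : ℤ) ∣ ((x^2 : ℕ) : ℤ) := by push_cast; exact_mod_cast h2
        exact_mod_cast this
      rcases eq_or_ne x 0 with rfl | hx0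
      · exact dvd_zero _
      · have hx2 : x^2 ≠ 0 := pow_ne_zero _ hx0
        have h4 := (Nat.Prime.pow_dvd_iff_le_factorization hp hx2).mp h3
        rw [Nat.factorization_pow] at h4
        simp only [Finsupp.smul_apply, smul_eq_mul] at h4
        exact (Nat.Prime.pow_dvd_iff_le_factorization hp hx0).mpr (by omega)
    have hcard : S.card ≤ p ^ (α - c) :=
      case1_count p α c hcle hp.pos S (Finset.filter_subset _ _) hdvd
    have hreal : ((p ^ (α - c) : ℕ) : ℝ) ≤ (p:ℝ) ^ ((α:ℝ)/2) := by
      push_cast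
      rw [← Real.rpow_natCast (p:ℝ) (α - c)]
      apply Real.rpow_le_rpow_of_exponent_le hp1R
      have h2 : 2 * (α - c) ≤ α := by omega
      have h2R : ((α - c : ℕ) : ℝ) * 2 ≤ (α : ℝ) := by exact_mod_cast (by omega : (α - c) * 2 ≤ α)
      linarith
    calc (S.card : ℝ) ≤ ((p ^ (α - c) : ℕ) : ℝ) := by exact_mod_cast hcard
    _ ≤ (p:ℝ) ^ ((α:ℝ)/2) := hreal
  · -- `α > 2t`: at most `2 p^t` solutions
    push_neg at hcase
    set m := α - 2*t with hm
    have hm1 : 1 ≤ m := by omega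
    have key : ∀ x ∈ S, p^t ∣ x ∧ ¬ p ∣ (x / p^t) ∧
        ((p:ℤ)^m ∣ ((x/p^t : ℕ):ℤ) - (u:ℤ) ∨ (p:ℤ)^m ∣ ((x/p^t : ℕ):ℤ) + (u:ℤ)) := by
      intro x hx
      have h1 := hSdvd x hx
      have hx0 : x ≠ 0 := by
        rintro rfl
        have h2 : (n:ℤ) ∣ (r:ℤ)^2 := by
          have e : (r:ℤ)^2 = -(((0:ℕ):ℤ)^2 - (r:ℤ)^2) := by push_cast; ring
          rw [e]; exact dvd_neg.mpr h1
        have h3 : p^α ∣ r^2 := by exact_mod_cast h2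
        have h4 := (Nat.Prime.pow_dvd_iff_le_factorization hp hr2ne).mp h3
        omega
      have hx2 : x^2 ≠ 0 := pow_ne_zero _ hx0
      have hr2dvd2t : p ^ (2*t) ∣ r ^ 2 :=
        (Nat.Prime.pow_dvd_iff_le_factorization hp hr2ne).mpr (by omega)
      have h2tdvd : p ^ (2*t) ∣ x ^ 2 := by
        have h2 : ((p^(2*t) : ℕ) : ℤ) ∣ (x:ℤ)^2 := by
          have ha : ((p^(2*t):ℕ):ℤ) ∣ (x:ℤ)^2 - (r:ℤ)^2 :=
            dvd_trans (by exact_mod_cast pow_dvd_pow p (by omega : 2*t ≤ α)) h1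
          have hb : ((p^(2*t):ℕ):ℤ) ∣ (r:ℤ)^2 := by exact_mod_cast hr2dvd2t
          have e : (x:ℤ)^2 = ((x:ℤ)^2 - (r:ℤ)^2) + (r:ℤ)^2 := by ring
          rw [e]; exact dvd_add ha hb
        exact_mod_cast h2
      have hnot : ¬ p ^ (2*t+1) ∣ x ^ 2 := by
        intro hcon
        have ha : ((p^(2*t+1):ℕ):ℤ) ∣ (x:ℤ)^2 - (r:ℤ)^2 :=
          dvd_trans (by exact_mod_cast pow_dvd_pow p (by omega : 2*t+1 ≤ α)) h1
        have hb : ((p^(2*t+1):ℕ):ℤ) ∣ (x:ℤ)^2 := by exact_mod_cast hcon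
        have hc2 : ((p^(2*t+1):ℕ):ℤ) ∣ (r:ℤ)^2 := by
          have e : (r:ℤ)^2 = (x:ℤ)^2 - ((x:ℤ)^2 - (r:ℤ)^2) := by ring
          rw [e]; exact dvd_sub hb ha
        have hc3 : p^(2*t+1) ∣ r^2 := by exact_mod_cast hc2
        have h4 := (Nat.Prime.pow_dvd_iff_le_factorization hp hr2ne).mp hc3
        omega
      have hfx : x.factorization p = t := by
        have ha := (Nat.Prime.pow_dvd_iff_le_factorization hp hx2).mp h2tdvd
        rw [Nat.factorization_pow] at ha
        simp only [Finsupp.smul_apply, smul_eq_mul] at ha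
        have hb : ¬ (2*t+1 ≤ (x^2).factorization p) := fun hcon =>
          hnot ((Nat.Prime.pow_dvd_iff_le_factorization hp hx2).mpr hcon)
        rw [Nat.factorization_pow] at hb
        simp only [Finsupp.smul_apply, smul_eq_mul] at hb
        omega
      have hxt : p ^ t ∣ x :=
        (Nat.Prime.pow_dvd_iff_le_factorization hp hx0).mpr (le_of_eq hfx.symm)
      have hpy : ¬ p ∣ (x / p^t) := by
        have h5 := Nat.not_dvd_ordCompl hp hx0
        rwa [hfx] at h5
      refine ⟨hxt, hpy, ?_⟩
      set y := x / p^t with hy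
      have hxy : x = p^t * y := (Nat.mul_div_cancel' hxt).symm
      have hpyZ : ¬ (p:ℤ) ∣ (y:ℤ) := fun hcon => hpy (by exact_mod_cast hcon)
      have h3 : (p:ℤ)^m ∣ (y:ℤ)^2 - (u:ℤ)^2 := by
        have e : (x:ℤ)^2 - (r:ℤ)^2 = (p:ℤ)^(2*t) * ((y:ℤ)^2 - (u:ℤ)^2) := by
          rw [hxy, hru]; push_cast; ring
        have h4 : (p:ℤ)^(2*t) * (p:ℤ)^m ∣ (p:ℤ)^(2*t) * ((y:ℤ)^2 - (u:ℤ)^2) := by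
          rw [← e, ← pow_add]
          have : 2*t + m = α := by omega
          rw [this]
          exact_mod_cast h1
        exact (mul_dvd_mul_iff_left (pow_ne_zero (2*t) (by exact_mod_cast hp.pos.ne' : (p:ℤ) ≠ 0))).mp h4
      exact pm_dvd hp (by omega) m hpyZ h3
    have hcard : S.card ≤ 2 * p^t := by
      have h := Finset.card_le_card_of_injOn (s := S)
        (t := Finset.range 2 ×ˢ Finset.range (p^t))
        (fun x => ((if (p:ℤ)^m ∣ ((x / p^t : ℕ):ℤ) - (u:ℤ) then 0 else 1), x / p^t / p^m)) ?_ ?_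
      · simpa [Finset.card_product] using h
      · intro x hx
        obtain ⟨hxt, hpy, hpm⟩ := key x hx
        simp only [Finset.mem_coe, Finset.mem_product, Finset.mem_range]
        constructor
        · split <;> omega
        · have hxlt : x < p ^ α := Finset.mem_range.mp (Finset.mem_filter.mp hx).1
          have h6 : x / p^t < p^(t+m) := by
            rw [Nat.div_lt_iff_lt_mul (pow_pos hp.pos t), ← pow_add]
            have e : t + m + t = α := by omega
            rwa [e]
          rw [Nat.div_lt_iff_lt_mul (pow_pos hp.pos m)]
          calc x / p^t < p^(t+m) := h6
          _ = p^t * p^m := pow_add p t m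
      · intro a ha b hb hab
        obtain ⟨hat, hay, ham⟩ := key a ha
        obtain ⟨hbt, hby, hbm⟩ := key b hb
        simp only [Prod.mk.injEq] at hab
        obtain ⟨hab1, hab2⟩ := hab
        set ya := a / p^t with hya
        set yb := b / p^t with hyb
        have hsub : (p:ℤ)^m ∣ (ya:ℤ) - (yb:ℤ) := by
          by_cases hda : (p:ℤ)^m ∣ (ya:ℤ) - (u:ℤ)
          · have hdb : (p:ℤ)^m ∣ (yb:ℤ) - (u:ℤ) := by
              by_contra hdb
              simp only [if_pos hda, if_neg hdb] at hab1
              exact absurd hab1 (by norm_num)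
            have h7 := dvd_sub hda hdb
            have e : ((ya:ℤ) - u) - ((yb:ℤ) - u) = (ya:ℤ) - (yb:ℤ) := by ring
            rwa [e] at h7
          · have hdb : ¬ (p:ℤ)^m ∣ (yb:ℤ) - (u:ℤ) := by
              intro hdb
              simp only [if_neg hda, if_pos hdb] at hab1
              exact absurd hab1 (by norm_num)
            have hda' := ham.resolve_left hda
            have hdb' := hbm.resolve_left hdb
            have h7 := dvd_sub hda' hdb'
            have e : ((ya:ℤ) + u) - ((yb:ℤ) + u) = (ya:ℤ) - (yb:ℤ) := by ring
            rwa [e] at h7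
        have hmod : yb % p^m = ya % p^m := by
          have h8 : ((p^m : ℕ) : ℤ) ∣ (ya:ℤ) - (yb:ℤ) := by push_cast; exact hsub
          exact (Nat.modEq_iff_dvd.mpr h8 : yb ≡ ya [MOD p^m])
        have hyy : ya = yb := by
          have hdiv : ya / p^m = yb / p^m := hab2
          calc ya = p^m * (ya / p^m) + ya % p^m := (Nat.div_add_mod _ _).symm
          _ = p^m * (yb / p^m) + yb % p^m := by rw [hdiv, ← hmod]
          _ = yb := Nat.div_add_mod _ _
        have ea : a = p^t * ya := (Nat.mul_div_cancel' hat).symm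
        have eb : b = p^t * yb := (Nat.mul_div_cancel' hbt).symm
        rw [ea, eb, hyy]
    have hreal : ((2 * p ^ t : ℕ) : ℝ) ≤ (p:ℝ) ^ ((α:ℝ)/2) := by
      push_cast
      have hsq : (2:ℝ) ≤ (p:ℝ) ^ ((1:ℝ)/2) := by
        rw [← Real.sqrt_eq_rpow]
        rw [show (2:ℝ) = Real.sqrt 4 by
          rw [show (4:ℝ) = 2^2 by norm_num, Real.sqrt_sq (by norm_num : (0:ℝ) ≤ 2)]]
        exact Real.sqrt_le_sqrt (by exact_mod_cast (by omega : 4 ≤ p))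
      have h1 : (p:ℝ) ^ ((t:ℝ) + 1/2) ≤ (p:ℝ) ^ ((α:ℝ)/2) := by
        apply Real.rpow_le_rpow_of_exponent_le hp1R
        have h2 : (2*t+1 : ℕ) ≤ α := by omega
        have h2R : ((2*t+1 : ℕ) : ℝ) ≤ (α : ℝ) := by exact_mod_cast h2
        push_cast at h2R
        linarith
      have e1 : (p:ℝ) ^ (t:ℕ) = (p:ℝ) ^ ((t:ℕ):ℝ) := (Real.rpow_natCast _ _).symm
      calc 2 * (p:ℝ) ^ (t:ℕ) ≤ (p:ℝ) ^ ((1:ℝ)/2) * (p:ℝ) ^ ((t:ℕ):ℝ) := by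
            rw [e1]
            exact mul_le_mul_of_nonneg_right hsq (Real.rpow_nonneg hppos.le _)
      _ = (p:ℝ) ^ ((t:ℝ) + 1/2) := by
            rw [← Real.rpow_add hppos]; ring_nf
      _ ≤ (p:ℝ) ^ ((α:ℝ)/2) := h1
    calc (S.card : ℝ) ≤ ((2 * p ^ t : ℕ) : ℝ) := by exact_mod_cast hcard
    _ ≤ (p:ℝ) ^ ((α:ℝ)/2) := hreal
end

section
/- Let p ≥ 5 be a prime dividing r (r ≥ 1 an integer). Then for every complex s with Re(s) ≥ 1, the Euler factor A_p(s) = ∑_{α=0}^∞ ρ_{r²}(p^α)/p^{αs} is nonzero. -/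
lemma key_dvd {p : ℕ} (hp : p.Prime) (α : ℕ) {a b : ℤ}
    (h : (p:ℤ)^α ∣ a * b) : (p:ℤ)^((α+1)/2) ∣ a ∨ (p:ℤ)^((α+1)/2) ∣ b := by
  haveI : Fact p.Prime := ⟨hp⟩
  rcases eq_or_ne a 0 with rfl | ha
  · exact Or.inl (dvd_zero _)
  rcases eq_or_ne b 0 with rfl | hb
  · exact Or.inr (dvd_zero _)
  by_contra hc
  push_neg at hc
  obtain ⟨h1, h2⟩ := hc
  rw [padicValInt_dvd_iff] at h h1 h2
  push_neg at h1 h2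
  have hmul := padicValInt.mul (p := p) ha hb
  have hab : a * b ≠ 0 := mul_ne_zero ha hb
  rcases h with h | h
  · exact hab h
  · omega

lemma count_mod_le (n m c : ℕ) (hd : m ∣ n) :
    ((Finset.range n).filter (fun x => x % m = c)).card ≤ n / m := by
  classical
  have h : ((Finset.range n).filter (fun x => x % m = c)).card
      ≤ (Finset.range (n / m)).card := by
    apply Finset.card_le_card_of_injOn (fun x => x / m)
    · intro x hx
      simp only [Finset.mem_coe, Finset.mem_filter, Finset.mem_range] at hx ⊢
      exact Nat.div_lt_div_of_lt_of_dvd hd hx.1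
    · intro x hx y hy hxy
      simp only [Finset.coe_filter, Set.mem_setOf_eq, Finset.mem_range] at hx hy
      have h1 := Nat.div_add_mod x m
      have h2 := Nat.div_add_mod y m
      have hxy' : x / m = y / m := hxy
      rw [← hxy'] at h2
      omega
  simpa using h

lemma rho_sq_le {p : ℕ} (hp : p.Prime) (r α : ℕ) :
    rho (r ^ 2) (p ^ α) ≤ 2 * p ^ (α - (α + 1) / 2) := by
  classical
  set β := (α + 1) / 2 with hβ
  have hβα : β ≤ α := by omega
  set N := p ^ β with hN
  have hNpos : 0 < N := pow_pos hp.pos β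
  have hdvdN : N ∣ p ^ α := pow_dvd_pow p hβα
  have hsub : (Finset.range (p ^ α)).filter (fun x => x ^ 2 % p ^ α = r ^ 2 % p ^ α) ⊆
      ((Finset.range (p ^ α)).filter (fun x => x % N = r % N)) ∪
      ((Finset.range (p ^ α)).filter (fun x => x % N = (N - r % N) % N)) := by
    intro x hx
    simp only [Finset.mem_filter, Finset.mem_range, Finset.mem_union] at hx ⊢
    obtain ⟨hx1, hx2⟩ := hx
    have hdvd : ((p : ℤ)) ^ α ∣ ((x : ℤ) - r) * ((x : ℤ) + r) := by
      have hmod : ((x : ℤ)) ^ 2 % (p : ℤ) ^ α = ((r : ℤ)) ^ 2 % (p : ℤ) ^ α := by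
        exact_mod_cast hx2
      have hd : ((p : ℤ)) ^ α ∣ ((x : ℤ) ^ 2 - (r : ℤ) ^ 2) :=
        Int.ModEq.dvd (Int.ModEq.symm hmod)
      have heq : ((x : ℤ) - r) * ((x : ℤ) + r) = (x : ℤ) ^ 2 - (r : ℤ) ^ 2 := by ring
      rwa [heq]
    rcases key_dvd hp α hdvd with hcase | hcase
    · left
      refine ⟨hx1, ?_⟩
      have hdvd' : ((N : ℤ)) ∣ ((x : ℤ) - r) := by rwa [hN, Nat.cast_pow]
      have hm : (x : ℤ) % (N : ℤ) = (r : ℤ) % (N : ℤ) :=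
        (Int.ModEq.symm (Int.modEq_iff_dvd.mpr (by rwa [show (x:ℤ) - r = x - r from rfl] at hdvd')))
      have : (↑(x % N) : ℤ) = (↑(r % N) : ℤ) := by
        rw [Int.natCast_mod, Int.natCast_mod]; exact hm
      exact_mod_cast this
    · right
      refine ⟨hx1, ?_⟩
      have hdn : N ∣ x + r := by
        have h' : ((N : ℤ)) ∣ ((x : ℤ) + r) := by rwa [hN, Nat.cast_pow]
        exact_mod_cast h'
      have h0 : (x + r) % N = 0 := by obtain ⟨k, hk⟩ := hdn; rw [hk]; exact Nat.mul_mod_right N k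
      have hxm : x % N < N := Nat.mod_lt _ hNpos
      have hrm : r % N < N := Nat.mod_lt _ hNpos
      have hadd : (x % N + r % N) % N = 0 := by rw [← Nat.add_mod]; exact h0
      rcases Nat.lt_or_ge (x % N + r % N) N with hlt | hge
      · have he : x % N + r % N = 0 := by rwa [Nat.mod_eq_of_lt hlt] at hadd
        have hr0 : r % N = 0 := by omega
        have hx0 : x % N = 0 := by omega
        rw [hx0, hr0, Nat.sub_zero, Nat.mod_self]
      · have he : x % N + r % N = N := by
          have h3 : (x % N + r % N - N) % N = 0 := by rw [← Nat.mod_eq_sub_mod hge]; exact hadd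
          have h4 : x % N + r % N - N < N := by omega
          rw [Nat.mod_eq_of_lt h4] at h3
          omega
        have hr0 : 0 < r % N := by omega
        have hlt' : N - r % N < N := by omega
        rw [Nat.mod_eq_of_lt hlt']
        omega
  have hdiv : p ^ α / N = p ^ (α - β) := by rw [hN, Nat.pow_div hβα hp.pos]
  unfold rho
  refine le_trans (Finset.card_le_card hsub) ?_
  refine le_trans (Finset.card_union_le _ _) ?_
  have h1 := count_mod_le (p ^ α) N (r % N) hdvdN
  have h2 := count_mod_le (p ^ α) N ((N - r % N) % N) hdvdN
  rw [hdiv] at h1 h2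
  omega

lemma nat_mod_eq_zero_of_dvd {a b : ℕ} (h : b ∣ a) : a % b = 0 := by
  obtain ⟨k, rfl⟩ := h; exact Nat.mul_mod_right b k

lemma rho_one (k : ℕ) : rho k 1 = 1 := by
  simp [rho, Nat.mod_one]

lemma rho_p_eq {p r : ℕ} (hp : p.Prime) (hpr : p ∣ r) : rho (r ^ 2) p = 1 := by
  classical
  have hr2 : r ^ 2 % p = 0 := nat_mod_eq_zero_of_dvd (hpr.trans (dvd_pow_self r two_ne_zero))
  have hfilter : (Finset.range p).filter (fun x => x ^ 2 % p = r ^ 2 % p) = {0} := by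
    ext x
    simp only [Finset.mem_filter, Finset.mem_range, Finset.mem_singleton]
    constructor
    · rintro ⟨h1, h2⟩
      rw [hr2] at h2
      have hx : p ∣ x := hp.dvd_of_dvd_pow (Nat.dvd_of_mod_eq_zero h2)
      exact Nat.eq_zero_of_dvd_of_lt hx h1
    · rintro rfl
      exact ⟨hp.pos, by simp [hr2]⟩
  unfold rho
  rw [hfilter, Finset.card_singleton]

theorem stmt_10 (r : ℕ) (hr : 1 ≤ r) (p : ℕ) (hp : p.Prime) (hp5 : 5 ≤ p)
    (hpr : p ∣ r) (s : ℂ) (hs : 1 ≤ s.re) :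
    (∑' α : ℕ, (rho (r ^ 2) (p ^ α) : ℂ) / (p : ℂ) ^ ((α : ℂ) * s)) ≠ 0 := by
  have hp0 : 0 < p := hp.pos
  have hp1 : (1:ℝ) < p := by exact_mod_cast hp.one_lt
  have hp5' : (5:ℝ) ≤ p := by exact_mod_cast hp5
  have hppos : (0:ℝ) < p := by linarith
  set q : ℝ := (p:ℝ) ^ (-(2⁻¹) : ℝ) with hqdef
  have hq0 : 0 < q := Real.rpow_pos_of_pos hppos _
  have hsq : ((p:ℝ) ^ ((2:ℝ)⁻¹)) ^ (2:ℕ) = p := by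
    rw [← Real.rpow_natCast ((p:ℝ) ^ ((2:ℝ)⁻¹)) 2, ← Real.rpow_mul hppos.le]
    norm_num
  have hroot_pos : 0 < (p:ℝ) ^ ((2:ℝ)⁻¹) := Real.rpow_pos_of_pos hppos _
  have hroot2 : (2:ℝ) < (p:ℝ) ^ ((2:ℝ)⁻¹) := by nlinarith
  have hqinv : q = ((p:ℝ) ^ ((2:ℝ)⁻¹))⁻¹ := by
    rw [hqdef, ← Real.rpow_neg_one ((p:ℝ) ^ ((2:ℝ)⁻¹)), ← Real.rpow_mul hppos.le]
    norm_num
  have hqhalf : q < 2⁻¹ := by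
    rw [hqinv]
    have := inv_strictAnti₀ (by norm_num : (0:ℝ) < 2) hroot2
    simpa using this
  have hq1 : q < 1 := lt_trans hqhalf (by norm_num)
  have hq2 : q ^ (2:ℕ) = (p:ℝ)⁻¹ := by
    rw [hqdef, ← Real.rpow_natCast ((p:ℝ) ^ (-(2⁻¹):ℝ)) 2, ← Real.rpow_mul hppos.le,
      ← Real.rpow_neg_one (p:ℝ)]
    norm_num
  set f : ℕ → ℂ := fun α => (rho (r ^ 2) (p ^ α) : ℂ) / (p : ℂ) ^ ((α : ℂ) * s) with hfdef
  have hnorm : ∀ α : ℕ, ‖f α‖ = (rho (r ^ 2) (p ^ α) : ℝ) / (p:ℝ) ^ ((α : ℝ) * s.re) := by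
    intro α
    rw [hfdef]
    simp only
    rw [norm_div, Complex.norm_natCast, Complex.norm_natCast_cpow_of_pos hp0]
    congr 2
    simp [Complex.mul_re]
  have hpow_le : ∀ α : ℕ, ((p:ℝ)) ^ (α:ℕ) ≤ (p:ℝ) ^ ((α : ℝ) * s.re) := by
    intro α
    rw [← Real.rpow_natCast (p:ℝ) α]
    apply (Real.rpow_le_rpow_left_iff hp1).mpr
    nlinarith [Nat.cast_nonneg (α := ℝ) α]
  have hbound : ∀ α : ℕ, ‖f α‖ ≤ 2 * q ^ α := by
    intro α
    rw [hnorm α]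
    set β := (α + 1) / 2 with hβdef
    have hβα : β ≤ α := by omega
    have hb1 : (rho (r ^ 2) (p ^ α) : ℝ) ≤ 2 * (p:ℝ) ^ ((α - β : ℕ)) := by
      exact_mod_cast rho_sq_le hp r α
    have hsplitpow : ((p:ℝ)) ^ (α:ℕ) = (p:ℝ) ^ ((α - β : ℕ)) * (p:ℝ) ^ (β:ℕ) := by
      rw [← pow_add]
      congr 1
      omega
    have hstep1 : (rho (r ^ 2) (p ^ α) : ℝ) / (p:ℝ) ^ ((α : ℝ) * s.re)
        ≤ (2 * (p:ℝ) ^ ((α - β : ℕ))) / ((p:ℝ) ^ (α:ℕ)) := by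
      apply div_le_div₀ (by positivity) hb1 (by positivity) (hpow_le α)
    have hstep2 : (2 * (p:ℝ) ^ ((α - β : ℕ))) / ((p:ℝ) ^ (α:ℕ)) = 2 / (p:ℝ) ^ (β:ℕ) := by
      rw [hsplitpow]
      field_simp
    have hqpow : q ^ α = ((p:ℝ) ^ (((α:ℝ))/2))⁻¹ := by
      rw [hqdef, ← Real.rpow_natCast ((p:ℝ) ^ (-(2⁻¹):ℝ)) α, ← Real.rpow_mul hppos.le,
        ← Real.rpow_neg hppos.le]
      ring_nf
    have hexp : ((α:ℝ))/2 ≤ (β:ℕ) := by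
      have h2β : α ≤ 2 * β := by omega
      have : (α:ℝ) ≤ 2 * (β:ℝ) := by exact_mod_cast h2β
      linarith
    have hmono : (p:ℝ) ^ (((α:ℝ))/2) ≤ (p:ℝ) ^ ((β:ℕ)) := by
      rw [← Real.rpow_natCast (p:ℝ) β]
      exact (Real.rpow_le_rpow_left_iff hp1).mpr hexp
    have hstep3 : 2 / (p:ℝ) ^ (β:ℕ) ≤ 2 * q ^ α := by
      rw [hqpow, ← div_eq_mul_inv]
      exact div_le_div_of_nonneg_left (by norm_num) (Real.rpow_pos_of_pos hppos _) hmono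
    linarith
  have hqsum : Summable (fun α : ℕ => 2 * q ^ α) :=
    (summable_geometric_of_lt_one hq0.le hq1).mul_left 2
  have hsumf : Summable f := Summable.of_norm_bounded hqsum hbound
  have hsumtail : Summable (fun k : ℕ => f (k + 2)) := (summable_nat_add_iff 2).mpr hsumf
  have hsplit : ∑' α, f α = (f 0 + f 1) + ∑' k, f (k + 2) := by
    have h := hsumf.sum_add_tsum_nat_add 2
    rw [← h]
    congr 1
    simp [Finset.sum_range_succ]
  have hf0 : f 0 = 1 := by
    rw [hfdef]
    simp only [pow_zero, rho_one, Nat.cast_one, Nat.cast_zero, zero_mul, Complex.cpow_zero,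
      div_one]
  have hf1 : ‖f 1‖ ≤ (p:ℝ)⁻¹ := by
    rw [hnorm 1, pow_one, rho_p_eq hp hpr, Nat.cast_one]
    rw [← one_div]
    have h1 := hpow_le 1
    rw [pow_one, Nat.cast_one] at h1
    exact div_le_div_of_nonneg_left (by norm_num) hppos h1
  have hnormtail : Summable (fun k : ℕ => ‖f (k + 2)‖) := hsumtail.norm
  have hgeo2 : Summable (fun k : ℕ => 2 * q ^ (2:ℕ) * q ^ k) :=
    (summable_geometric_of_lt_one hq0.le hq1).mul_left _
  have htail : ‖∑' k, f (k + 2)‖ ≤ 2 * q ^ (2:ℕ) * (1 - q)⁻¹ := by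
    calc ‖∑' k, f (k + 2)‖ ≤ ∑' k, ‖f (k + 2)‖ := norm_tsum_le_tsum_norm hnormtail
      _ ≤ ∑' k, 2 * q ^ (2:ℕ) * q ^ k := by
          apply Summable.tsum_le_tsum _ hnormtail hgeo2
          intro k
          have hb := hbound (k + 2)
          calc ‖f (k + 2)‖ ≤ 2 * q ^ (k + 2) := hb
            _ = 2 * q ^ (2:ℕ) * q ^ k := by ring
      _ = 2 * q ^ (2:ℕ) * (1 - q)⁻¹ := by
          rw [tsum_mul_left, tsum_geometric_of_lt_one hq0.le hq1]
  have hnum : (p:ℝ)⁻¹ + 2 * q ^ (2:ℕ) * (1 - q)⁻¹ < 1 := by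
    rw [hq2]
    have h1q : (2:ℝ)⁻¹ < 1 - q := by linarith
    have hinv2 : (1 - q)⁻¹ < 2 := by
      have := inv_strictAnti₀ (by norm_num : (0:ℝ) < 2⁻¹) h1q
      simpa using this
    have hpinv : (p:ℝ)⁻¹ ≤ 5⁻¹ := by
      apply inv_anti₀ (by norm_num) hp5'
    have hpinvpos : (0:ℝ) < (p:ℝ)⁻¹ := by positivity
    nlinarith
  show (∑' α, f α) ≠ 0
  rw [hsplit, hf0]
  intro hzero
  have heq : (1:ℂ) = -(f 1 + ∑' k, f (k + 2)) := by
    linear_combination hzero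
  have hnorm1 : (1:ℝ) ≤ ‖f 1‖ + ‖∑' k, f (k + 2)‖ := by
    have : ‖(1:ℂ)‖ = ‖f 1 + ∑' k, f (k + 2)‖ := by rw [heq, norm_neg]
    rw [norm_one] at this
    exact this.le.trans (norm_add_le _ _)
  linarith [hf1, htail, hnum, hnorm1]
end

section
/- Let Ω ≥ 1 be odd with σ_{−1}(Ω) ≤ 4/3. Define C₁(Ω) = ∑_{d ∣ Ω} (1/d)·(1 − ∑_{f ∣ 2Ω/d, f ≥ 2} 1/f). Then 0 < C₁(Ω) ≤ 1/2. -/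
open Finset

lemma sum_inv_div (n : ℕ) (hn : n ≠ 0) :
    ∑ f ∈ n.divisors, (1 : ℝ) / f = (∑ d ∈ n.divisors, (d : ℝ)) / n := by
  rw [← Nat.sum_div_divisors n (fun d => (1 : ℝ) / d), Finset.sum_div]
  refine Finset.sum_congr rfl fun d hd => ?_
  have hdvd : d ∣ n := (Nat.mem_divisors.mp hd).1
  have hd0 : (d : ℝ) ≠ 0 := Nat.cast_ne_zero.mpr (Nat.pos_of_mem_divisors hd).ne'
  rw [Nat.cast_div hdvd hd0, one_div_div]

lemma sum_inv_two_mul (m : ℕ) (hm : m ≠ 0) (hmo : Odd m) :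
    ∑ f ∈ (2 * m).divisors, (1 : ℝ) / f = 3 / 2 * ∑ e ∈ m.divisors, (1 : ℝ) / e := by
  have hcop : Nat.Coprime 2 m := Nat.coprime_two_left.mpr hmo
  rw [sum_inv_div _ (by positivity), sum_inv_div _ hm, ← Nat.cast_sum, ← Nat.cast_sum,
    hcop.sum_divisors_mul]
  have h2 : (∑ d ∈ Nat.divisors 2, d) = 3 := by decide
  rw [h2]
  have hm' : (m : ℝ) ≠ 0 := Nat.cast_ne_zero.mpr hm
  push_cast
  field_simp

lemma sum_inv_filter (n : ℕ) (hn : n ≠ 0) :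
    ∑ f ∈ n.divisors.filter (fun f => 2 ≤ f), (1 : ℝ) / f
      = (∑ f ∈ n.divisors, (1 : ℝ) / f) - 1 := by
  have hsplit := Finset.sum_filter_add_sum_filter_not n.divisors (fun f => 2 ≤ f)
    (fun f => (1 : ℝ) / f)
  have h1 : n.divisors.filter (fun f => ¬ 2 ≤ f) = {1} := by
    ext a
    simp only [Finset.mem_filter, Nat.mem_divisors, Finset.mem_singleton]
    constructor
    · rintro ⟨⟨ha, -⟩, h2⟩
      have := Nat.pos_of_dvd_of_pos ha (Nat.pos_of_ne_zero hn)
      omega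
    · rintro rfl
      exact ⟨⟨one_dvd n, hn⟩, by omega⟩
  rw [h1] at hsplit
  simp only [Finset.sum_singleton, Nat.cast_one, div_one] at hsplit
  linarith

theorem stmt_13 (Ω : ℕ) (hΩ : 1 ≤ Ω) (hodd : Odd Ω)
    (hσ : (∑ d ∈ Ω.divisors, (1 : ℝ) / d) ≤ 4 / 3) :
    0 < (∑ d ∈ Ω.divisors, (1 : ℝ) / d *
          (1 - ∑ f ∈ (2 * Ω / d).divisors.filter (fun f => 2 ≤ f), (1 : ℝ) / f)) ∧
    (∑ d ∈ Ω.divisors, (1 : ℝ) / d *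
          (1 - ∑ f ∈ (2 * Ω / d).divisors.filter (fun f => 2 ≤ f), (1 : ℝ) / f)) ≤ 1 / 2 := by
  have hΩ0 : Ω ≠ 0 := by omega
  set S : ℝ := ∑ d ∈ Ω.divisors, (1 : ℝ) / d with hS
  set T : ℝ := ∑ d ∈ Ω.divisors, (1 : ℝ) / d * ∑ e ∈ (Ω / d).divisors, (1 : ℝ) / e with hT
  -- rewrite each term
  have key : ∀ d ∈ Ω.divisors,
      (1 : ℝ) / d * (1 - ∑ f ∈ (2 * Ω / d).divisors.filter (fun f => 2 ≤ f), (1 : ℝ) / f)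
        = 2 * ((1 : ℝ) / d) - 3 / 2 * ((1 : ℝ) / d * ∑ e ∈ (Ω / d).divisors, (1 : ℝ) / e) := by
    intro d hd
    have hdvd : d ∣ Ω := (Nat.mem_divisors.mp hd).1
    have hm0 : Ω / d ≠ 0 := (Nat.div_pos (Nat.le_of_dvd (by omega) hdvd)
      (Nat.pos_of_mem_divisors hd)).ne'
    have hmo : Odd (Ω / d) := hodd.of_dvd_nat (Nat.div_dvd_of_dvd hdvd)
    rw [Nat.mul_div_assoc 2 hdvd, sum_inv_filter _ (by positivity),
      sum_inv_two_mul _ hm0 hmo]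
    ring
  rw [Finset.sum_congr rfl key, Finset.sum_sub_distrib, ← Finset.mul_sum, ← Finset.mul_sum,
    ← hS, ← hT]
  -- basic facts
  have h1mem : 1 ∈ Ω.divisors := Nat.one_mem_divisors.mpr hΩ0
  have hnonneg : ∀ d ∈ Ω.divisors, 0 ≤ (1 : ℝ) / d := fun d _ => by positivity
  have hS1 : 1 ≤ S := by
    have := Finset.single_le_sum hnonneg h1mem
    rw [Nat.cast_one, div_one] at this
    exact this
  have hinner1 : ∀ d ∈ Ω.divisors, 1 ≤ ∑ e ∈ (Ω / d).divisors, (1 : ℝ) / e := by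
    intro d hd
    have hdvd : d ∣ Ω := (Nat.mem_divisors.mp hd).1
    have hm0 : Ω / d ≠ 0 := (Nat.div_pos (Nat.le_of_dvd (by omega) hdvd)
      (Nat.pos_of_mem_divisors hd)).ne'
    have := Finset.single_le_sum (f := fun e : ℕ => (1 : ℝ) / e)
      (fun e _ => by positivity) (Nat.one_mem_divisors.mpr hm0)
    simpa using this
  have hinnerS : ∀ d ∈ Ω.divisors, (∑ e ∈ (Ω / d).divisors, (1 : ℝ) / e) ≤ S := by
    intro d hd
    have hdvd : (Ω / d) ∣ Ω := Nat.div_dvd_of_dvd (Nat.mem_divisors.mp hd).1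
    exact Finset.sum_le_sum_of_subset_of_nonneg
      (Nat.divisors_subset_of_dvd hΩ0 hdvd) (fun e _ _ => by positivity)
  -- lower bound for T : T ≥ 2S - 1
  have hTlow : 2 * S - 1 ≤ T := by
    have hsplit := Finset.add_sum_erase Ω.divisors
      (fun d => (1 : ℝ) / d * ∑ e ∈ (Ω / d).divisors, (1 : ℝ) / e) h1mem
    have hsplitS := Finset.add_sum_erase Ω.divisors (fun d => (1 : ℝ) / d) h1mem
    have hterm1 : (fun d : ℕ => (1 : ℝ) / d * ∑ e ∈ (Ω / d).divisors, (1 : ℝ) / e) 1 = S := by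
      simp [hS]
    have hterm2 : (fun d : ℕ => (1 : ℝ) / d) 1 = (1 : ℝ) := by norm_num
    have hrest : ∑ d ∈ Ω.divisors.erase 1, (1 : ℝ) / d
        ≤ ∑ d ∈ Ω.divisors.erase 1, (1 : ℝ) / d * ∑ e ∈ (Ω / d).divisors, (1 : ℝ) / e := by
      refine Finset.sum_le_sum fun d hd => ?_
      have hd' := Finset.mem_of_mem_erase hd
      have := hinner1 d hd'
      have h0 : (0 : ℝ) ≤ 1 / d := hnonneg d hd'
      nlinarith
    beta_reduce at hterm1
    rw [hterm1] at hsplit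
    beta_reduce at hterm2
    rw [hterm2] at hsplitS
    linarith
  constructor
  · -- positivity
    rcases eq_or_lt_of_le hΩ with hΩ1 | hΩ1
    · -- Ω = 1
      have : Ω = 1 := hΩ1.symm
      subst this
      have hSval : S = 1 := by simp [hS]
      have hTval : T = 1 := by simp [hT]
      rw [hSval, hTval]; norm_num
    · -- Ω > 1 : T < S * S
      have hSgt : 1 < S := by
        have hmem : ({1, Ω} : Finset ℕ) ⊆ Ω.divisors := by
          intro x hx
          simp only [Finset.mem_insert, Finset.mem_singleton] at hx
          rcases hx with rfl | rfl
          · exact h1mem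
          · exact Nat.mem_divisors_self _ hΩ0
        have hsum : (1 : ℝ) + 1 / Ω ≤ S := by
          have := Finset.sum_le_sum_of_subset_of_nonneg hmem
            (fun d _ _ => hnonneg d (by assumption))
          rwa [Finset.sum_pair (by omega : (1 : ℕ) ≠ Ω), Nat.cast_one, div_one] at this
        have : (0 : ℝ) < 1 / Ω := by
          have : (0 : ℝ) < Ω := by exact_mod_cast Nat.pos_of_ne_zero hΩ0
          positivity
        linarith
      have hTS : T < S * S := by
        have hSS : S * S = ∑ d ∈ Ω.divisors, (1 : ℝ) / d * S := by
          rw [← Finset.sum_mul]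
        rw [hSS, hT]
        refine Finset.sum_lt_sum (fun d hd => ?_) ⟨Ω, Nat.mem_divisors_self Ω hΩ0, ?_⟩
        · have h0 : (0 : ℝ) ≤ 1 / d := hnonneg d hd
          have := hinnerS d hd
          nlinarith
        · have hΩself : Ω / Ω = 1 := Nat.div_self (by omega)
          rw [hΩself]
          simp only [Nat.divisors_one, Finset.sum_singleton, Nat.cast_one, div_one,
            mul_one, ← hS]
          have hpos : (0 : ℝ) < 1 / Ω := by
            have : (0 : ℝ) < Ω := by exact_mod_cast Nat.pos_of_ne_zero hΩ0
            positivity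
          nlinarith
      nlinarith
  · linarith
end
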